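/- arXiv:1611.10147 — 7 statements merged into one kernel-verified Lean document; each statement's English description precedes it below -/
import Mathlib

section
/- For every ℓ ≥ 1, the polynomial identity ((1+x)/2)^{ℓ+1} · A_ℓ(x) - A_ℓ(x²) = -((1-x)/2)^{ℓ+1} · A_ℓ(-x) holds in ℚ[x], where A_ℓ is the Eulerian polynomial. -/
open PowerSeries Polynomial

/-- The "even doubling" operation on power series: `(Eev f)(x) = f(x²)`. -/
noncomputable def Eev (f : PowerSeries ℚ) : PowerSeries ℚ :=
  PowerSeries.mk fun n => if 2 ∣ n then PowerSeries.coeff (n / 2) f else 0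

lemma Eev_coe (p : Polynomial ℚ) :
    ((Polynomial.expand ℚ 2 p : Polynomial ℚ) : PowerSeries ℚ) = Eev ↑p := by
  ext n
  simp [Eev, Polynomial.coeff_coe, Polynomial.coeff_expand (by norm_num : 0 < 2)]

lemma Eev_mul (f g : PowerSeries ℚ) : Eev (f * g) = Eev f * Eev g := by
  ext n
  simp only [Eev]
  rw [PowerSeries.coeff_mul, coeff_mk]
  simp only [coeff_mk]
  by_cases hn : 2 ∣ n
  · obtain ⟨m, rfl⟩ := hn
    rw [if_pos ⟨m, rfl⟩, Nat.mul_div_cancel_left _ (by norm_num : 0 < 2),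
      PowerSeries.coeff_mul]
    have hsub : (Finset.HasAntidiagonal.antidiagonal m).image (fun p : ℕ × ℕ => (2 * p.1, 2 * p.2))
        ⊆ Finset.HasAntidiagonal.antidiagonal (2 * m) := by
      intro p hp
      simp only [Finset.mem_image, Finset.HasAntidiagonal.mem_antidiagonal] at hp ⊢
      obtain ⟨q, hq, rfl⟩ := hp
      omega
    have hvan : ∀ p ∈ Finset.HasAntidiagonal.antidiagonal (2 * m),
        p ∉ (Finset.HasAntidiagonal.antidiagonal m).image (fun p : ℕ × ℕ => (2 * p.1, 2 * p.2)) →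
        (if 2 ∣ p.1 then PowerSeries.coeff (p.1 / 2) f else 0) *
          (if 2 ∣ p.2 then PowerSeries.coeff (p.2 / 2) g else 0) = 0 := by
      intro p hp hnotin
      rw [Finset.HasAntidiagonal.mem_antidiagonal] at hp
      by_cases h1 : 2 ∣ p.1
      · exfalso
        apply hnotin
        simp only [Finset.mem_image, Finset.HasAntidiagonal.mem_antidiagonal]
        refine ⟨(p.1 / 2, p.2 / 2), by omega, ?_⟩
        simp only [Prod.ext_iff]
        constructor <;> omega
      · rw [if_neg h1, zero_mul]
    rw [← Finset.sum_subset hsub hvan,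
      Finset.sum_image (by intro a _ b _ h; simpa [Prod.ext_iff] using h)]
    apply Finset.sum_congr rfl
    intro p _
    simp [Nat.mul_div_cancel_left _ (by norm_num : 0 < 2)]
  · rw [if_neg hn]
    refine (Finset.sum_eq_zero ?_).symm
    intro p hp
    rw [Finset.HasAntidiagonal.mem_antidiagonal] at hp
    by_cases h1 : 2 ∣ p.1
    · have h2 : ¬ 2 ∣ p.2 := by omega
      rw [if_neg h2, mul_zero]
    · rw [if_neg h1, zero_mul]

lemma coe_comp_neg_X (p : Polynomial ℚ) :
    ((p.comp (-Polynomial.X) : Polynomial ℚ) : PowerSeries ℚ) =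
      PowerSeries.rescale (-1) ↑p := by
  have h : (Polynomial.coeToPowerSeries.ringHom.comp
      (Polynomial.eval₂RingHom Polynomial.C (-Polynomial.X)) :
        Polynomial ℚ →+* PowerSeries ℚ)
      = (PowerSeries.rescale (-1)).comp Polynomial.coeToPowerSeries.ringHom := by
    apply Polynomial.ringHom_ext
    · intro a
      simp only [RingHom.coe_comp, Function.comp_apply, coe_eval₂RingHom, Polynomial.eval₂_C,
        Polynomial.coeToPowerSeries.ringHom_apply, Polynomial.coe_C]
      ext n
      simp only [PowerSeries.coeff_rescale, PowerSeries.coeff_C]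
      split <;> simp_all
    · simp only [RingHom.coe_comp, Function.comp_apply, coe_eval₂RingHom, Polynomial.eval₂_X,
        Polynomial.coeToPowerSeries.ringHom_apply, Polynomial.coe_neg, Polynomial.coe_X,
        PowerSeries.rescale_neg_one_X]
  have := RingHom.congr_fun h p
  simpa [Polynomial.comp] using this

lemma final_lemma (L : ℕ) (F G H c d : PowerSeries ℚ) (hc : c * d = 1)
    (key : F + H = d ^ L * G) :
    (c * (1 + PowerSeries.X)) ^ L * ((1 - PowerSeries.X) ^ L * F) -
        (1 - PowerSeries.X ^ 2) ^ L * G =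
      -((c * (1 - PowerSeries.X)) ^ L * ((1 + PowerSeries.X) ^ L * H)) := by
  have h1 : ((1 + PowerSeries.X) * (1 - PowerSeries.X) : PowerSeries ℚ)
      = 1 - PowerSeries.X ^ 2 := by ring
  have h2 : c ^ L * d ^ L = 1 := by rw [← mul_pow, hc, one_pow]
  have main : (c * (1 + PowerSeries.X)) ^ L * ((1 - PowerSeries.X) ^ L * F) +
      (c * (1 - PowerSeries.X)) ^ L * ((1 + PowerSeries.X) ^ L * H)
      = (1 - PowerSeries.X ^ 2) ^ L * G := by
    have e1 : (c * (1 + PowerSeries.X)) ^ L * ((1 - PowerSeries.X) ^ L * F) +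
        (c * (1 - PowerSeries.X)) ^ L * ((1 + PowerSeries.X) ^ L * H)
        = (c ^ L * ((1 + PowerSeries.X) * (1 - PowerSeries.X)) ^ L) * (F + H) := by
      rw [mul_pow c, mul_pow c, mul_pow (1 + PowerSeries.X)]
      ring
    rw [e1, h1, key]
    calc (c ^ L * (1 - PowerSeries.X ^ 2) ^ L) * (d ^ L * G)
        = (c ^ L * d ^ L) * ((1 - PowerSeries.X ^ 2) ^ L * G) := by ring
      _ = (1 - PowerSeries.X ^ 2) ^ L * G := by rw [h2, one_mul]
  linear_combination main

/-- For `ℓ ≥ 1`, the Eulerian polynomial satisfies the identity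
`((1+x)/2)^{ℓ+1}·A_ℓ(x) - A_ℓ(x²) = -((1-x)/2)^{ℓ+1}·A_ℓ(-x)` in `ℚ[x]`. -/
theorem eulerian_identity_m2 (ℓ : ℕ) (hℓ : 1 ≤ ℓ) (A : Polynomial ℚ)
    (hA : (A : PowerSeries ℚ) =
      (1 - PowerSeries.X) ^ (ℓ + 1) * PowerSeries.mk (fun n => (n : ℚ) ^ ℓ)) :
    (Polynomial.C ((2 : ℚ))⁻¹ * (1 + Polynomial.X)) ^ (ℓ + 1) * A -
        A.comp (Polynomial.X ^ 2) =
      -((Polynomial.C ((2 : ℚ))⁻¹ * (1 - Polynomial.X)) ^ (ℓ + 1) *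
        A.comp (-Polynomial.X)) := by
  rw [← Polynomial.coe_inj]
  simp only [Polynomial.coe_sub, Polynomial.coe_neg, Polynomial.coe_mul, Polynomial.coe_pow,
    Polynomial.coe_add, Polynomial.coe_one, Polynomial.coe_X, Polynomial.coe_C]
  have hsq : ((A.comp (Polynomial.X ^ 2) : Polynomial ℚ) : PowerSeries ℚ) = Eev ↑A := by
    rw [← Polynomial.expand_eq_comp_X_pow, Eev_coe]
  rw [hsq, coe_comp_neg_X, hA]
  have hEev : Eev ((1 - PowerSeries.X) ^ (ℓ + 1) * PowerSeries.mk fun n => (n : ℚ) ^ ℓ)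
      = (1 - PowerSeries.X ^ 2) ^ (ℓ + 1) *
        PowerSeries.mk (fun n => if 2 ∣ n then ((n / 2 : ℕ) : ℚ) ^ ℓ else 0) := by
    rw [Eev_mul]
    congr 1
    · have h := Eev_coe ((1 - Polynomial.X) ^ (ℓ + 1))
      have h2 : (Polynomial.expand ℚ 2) ((1 - Polynomial.X) ^ (ℓ + 1))
          = (1 - Polynomial.X ^ 2) ^ (ℓ + 1) := by
        rw [map_pow, map_sub, map_one, Polynomial.expand_X]
      rw [h2] at h
      simp only [Polynomial.coe_pow, Polynomial.coe_sub, Polynomial.coe_one,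
        Polynomial.coe_X] at h
      exact h.symm
    · ext n
      simp [Eev, coeff_mk]
  have hres : PowerSeries.rescale (-1)
      ((1 - PowerSeries.X) ^ (ℓ + 1) * PowerSeries.mk fun n => (n : ℚ) ^ ℓ)
      = (1 + PowerSeries.X) ^ (ℓ + 1) *
        PowerSeries.mk fun n => (-1 : ℚ) ^ n * (n : ℚ) ^ ℓ := by
    rw [map_mul, map_pow, map_sub, map_one, PowerSeries.rescale_neg_one_X, sub_neg_eq_add,
      PowerSeries.rescale_mk]
  rw [hEev, hres]
  have hc : (PowerSeries.C (2 : ℚ)⁻¹) * (PowerSeries.C (2 : ℚ)) = 1 := by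
    rw [← map_mul]
    norm_num
  have key : (PowerSeries.mk fun n => (n : ℚ) ^ ℓ) +
      (PowerSeries.mk fun n => (-1 : ℚ) ^ n * (n : ℚ) ^ ℓ)
      = ((PowerSeries.C (2 : ℚ))) ^ (ℓ + 1) *
        PowerSeries.mk (fun n => if 2 ∣ n then ((n / 2 : ℕ) : ℚ) ^ ℓ else 0) := by
    rw [← map_pow]
    ext n
    rw [map_add, coeff_mk, coeff_mk, PowerSeries.coeff_C_mul, coeff_mk]
    rcases Nat.even_or_odd n with ⟨m, rfl⟩ | hodd
    · rw [if_pos ⟨m, by omega⟩, show (m + m) / 2 = m by omega,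
        show ((m + m : ℕ) : ℚ) = 2 * (m : ℚ) by push_cast; ring,
        Even.neg_one_pow ⟨m, rfl⟩, mul_pow]
      ring
    · obtain ⟨k, rfl⟩ := hodd
      rw [if_neg (by omega : ¬ 2 ∣ (2 * k + 1)), Odd.neg_one_pow ⟨k, rfl⟩]
      ring
  exact final_lemma (ℓ + 1) _ _ _ _ _ hc key
end

section
/- For ℓ ≥ 1, the congruence A_ℓ(x²) ≡ ((1+x)/2)^{ℓ+1} · A_ℓ(x) mod (x-1)^{ℓ+1} holds in ℚ[x]; i.e., (x-1)^{ℓ+1} divides A_ℓ(x²) - ((1+x)/2)^{ℓ+1} A_ℓ(x). -/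
open PowerSeries Polynomial

/-- Substitution `X ↦ X²` on power series, as a bare function. -/
noncomputable def sqSubst (f : PowerSeries ℚ) : PowerSeries ℚ :=
  PowerSeries.mk fun n => if 2 ∣ n then PowerSeries.coeff (n / 2) f else 0

lemma coeff_sqSubst (f : PowerSeries ℚ) (n : ℕ) :
    PowerSeries.coeff n (sqSubst f) =
      if 2 ∣ n then PowerSeries.coeff (n / 2) f else 0 :=
  PowerSeries.coeff_mk _ _

lemma sqSubst_add (f g : PowerSeries ℚ) :
    sqSubst (f + g) = sqSubst f + sqSubst g := by
  ext n
  simp [coeff_sqSubst]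
  split <;> simp

lemma sqSubst_one : sqSubst (1 : PowerSeries ℚ) = 1 := by
  ext n
  simp only [coeff_sqSubst, PowerSeries.coeff_one]
  split_ifs <;> first | rfl | (exfalso; omega)

lemma sqSubst_X_mul (f : PowerSeries ℚ) :
    sqSubst (PowerSeries.X * f) = PowerSeries.X ^ 2 * sqSubst f := by
  ext n
  have h1 : (PowerSeries.X : PowerSeries ℚ) * f = PowerSeries.X ^ 1 * f := by rw [pow_one]
  rw [h1]
  simp only [coeff_sqSubst, PowerSeries.coeff_X_pow_mul']
  rcases Nat.even_or_odd n with ⟨m, rfl⟩ | ⟨m, rfl⟩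
  · have hd : 2 ∣ (m + m) := ⟨m, by ring⟩
    have h2 : (m + m) / 2 = m := by omega
    rw [if_pos hd, h2]
    cases m with
    | zero => norm_num
    | succ k =>
      rw [if_pos (by omega : 1 ≤ k + 1), if_pos (by omega : 2 ≤ k + 1 + (k + 1)),
        if_pos (by omega : (2:ℕ) ∣ (k + 1 + (k + 1) - 2)),
        (by omega : k + 1 - 1 = k), (by omega : (k + 1 + (k + 1) - 2) / 2 = k)]
  · rw [if_neg (by omega : ¬ (2:ℕ) ∣ (2 * m + 1))]
    rcases Nat.lt_or_ge (2 * m + 1) 2 with h | h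
    · rw [if_neg (by omega)]
    · rw [if_pos h, if_neg (by omega : ¬ (2:ℕ) ∣ (2 * m + 1 - 2))]

lemma sqSubst_poly_mul (p : Polynomial ℚ) :
    ∀ f : PowerSeries ℚ,
      sqSubst ((p : PowerSeries ℚ) * f) =
        ((p.comp (Polynomial.X ^ 2) : Polynomial ℚ) : PowerSeries ℚ) * sqSubst f := by
  induction p using Polynomial.induction_on with
  | C a =>
    intro f
    ext n
    simp only [Polynomial.C_comp, Polynomial.coe_C, PowerSeries.coeff_C_mul, coeff_sqSubst,
      mul_ite, mul_zero]
  | add p q hp hq =>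
    intro f
    rw [Polynomial.coe_add, add_mul, sqSubst_add, hp, hq, Polynomial.add_comp,
      Polynomial.coe_add, add_mul]
  | monomial n a ih =>
    intro f
    have h1 : ((Polynomial.C a * Polynomial.X ^ (n + 1) : Polynomial ℚ) : PowerSeries ℚ) * f =
        ((Polynomial.C a * Polynomial.X ^ n : Polynomial ℚ) : PowerSeries ℚ)
          * (PowerSeries.X * f) := by
      push_cast [Polynomial.coe_mul, Polynomial.coe_pow, Polynomial.coe_C, Polynomial.coe_X]
      ring
    rw [h1, ih, sqSubst_X_mul]
    have h2 : (Polynomial.C a * Polynomial.X ^ (n + 1)).comp (Polynomial.X ^ 2) =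
        (Polynomial.C a * Polynomial.X ^ n).comp (Polynomial.X ^ 2) * Polynomial.X ^ 2 := by
      simp [Polynomial.mul_comp, Polynomial.pow_comp, pow_succ, mul_assoc]
    rw [h2, Polynomial.coe_mul, Polynomial.coe_pow, Polynomial.coe_X]
    ring

lemma coe_comp_X_sq (p : Polynomial ℚ) :
    ((p.comp (Polynomial.X ^ 2) : Polynomial ℚ) : PowerSeries ℚ) = sqSubst p := by
  have := sqSubst_poly_mul p 1
  rw [mul_one, sqSubst_one, mul_one] at this
  exact this.symm

lemma rescale_coe (p : Polynomial ℚ) :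
    PowerSeries.rescale (-1 : ℚ) p = ((p.comp (-Polynomial.X) : Polynomial ℚ) : PowerSeries ℚ) := by
  induction p using Polynomial.induction_on with
  | C a =>
    ext k
    simp only [PowerSeries.coeff_rescale, Polynomial.coeff_coe, Polynomial.C_comp,
      Polynomial.coeff_C]
    split_ifs with h
    · subst h; simp
    · simp
  | add p q hp hq =>
    rw [Polynomial.coe_add, map_add, hp, hq, Polynomial.add_comp, Polynomial.coe_add]
  | monomial n a _ =>
    have hX : (-Polynomial.X : Polynomial ℚ) = Polynomial.C (-1 : ℚ) * Polynomial.X := by simp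
    ext k
    simp only [PowerSeries.coeff_rescale, Polynomial.coeff_coe, Polynomial.mul_comp,
      Polynomial.C_comp, Polynomial.pow_comp, Polynomial.X_comp, hX, mul_pow, ← map_pow,
      Polynomial.coeff_C_mul, Polynomial.coeff_X_pow, mul_ite, mul_zero, ite_mul, zero_mul]
    split_ifs with h
    · subst h; ring
    · ring

/-- For `ℓ ≥ 1`, `A_ℓ(x²) ≡ ((1+x)/2)^{ℓ+1}·A_ℓ(x) mod (x-1)^{ℓ+1}` in `ℚ[x]`. -/
theorem eulerian_congruence_m2 (ℓ : ℕ) (hℓ : 1 ≤ ℓ) (A : Polynomial ℚ)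
    (hA : (A : PowerSeries ℚ) =
      (1 - PowerSeries.X) ^ (ℓ + 1) * PowerSeries.mk (fun n => (n : ℚ) ^ ℓ)) :
    (Polynomial.X - 1) ^ (ℓ + 1) ∣
      A.comp (Polynomial.X ^ 2) -
        (Polynomial.C ((2 : ℚ))⁻¹ * (1 + Polynomial.X)) ^ (ℓ + 1) * A := by
  set f : PowerSeries ℚ := PowerSeries.mk fun n => (n : ℚ) ^ ℓ with hf
  have hq : (((1 - Polynomial.X : Polynomial ℚ) ^ (ℓ + 1) : Polynomial ℚ) : PowerSeries ℚ)
      = (1 - PowerSeries.X) ^ (ℓ + 1) := by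
    rw [Polynomial.coe_pow, Polynomial.coe_sub, Polynomial.coe_one, Polynomial.coe_X]
  have h1 : ((A.comp (Polynomial.X ^ 2) : Polynomial ℚ) : PowerSeries ℚ)
      = ((1 : PowerSeries ℚ) - PowerSeries.X ^ 2) ^ (ℓ + 1) * sqSubst f := by
    rw [coe_comp_X_sq, hA, ← hq, sqSubst_poly_mul]
    congr 1
    rw [Polynomial.pow_comp, Polynomial.sub_comp, Polynomial.one_comp, Polynomial.X_comp,
      Polynomial.coe_pow, Polynomial.coe_sub, Polynomial.coe_one, Polynomial.coe_pow,
      Polynomial.coe_X]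
  have hrX : PowerSeries.rescale (-1 : ℚ) PowerSeries.X = -PowerSeries.X := by
    ext k
    simp only [PowerSeries.coeff_rescale, PowerSeries.coeff_X, map_neg]
    split_ifs with h
    · subst h; norm_num
    · simp
  have h2 : ((A.comp (-Polynomial.X) : Polynomial ℚ) : PowerSeries ℚ)
      = ((1 : PowerSeries ℚ) + PowerSeries.X) ^ (ℓ + 1) * PowerSeries.rescale (-1 : ℚ) f := by
    rw [← rescale_coe, hA, map_mul, map_pow, map_sub, map_one, hrX, sub_neg_eq_add]
  have key : f + PowerSeries.rescale (-1 : ℚ) f = (2 : PowerSeries ℚ) ^ (ℓ + 1) * sqSubst f := by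
    have hC2 : ((2 : PowerSeries ℚ)) ^ (ℓ + 1) = PowerSeries.C ((2 : ℚ) ^ (ℓ + 1)) := by
      rw [map_pow, map_ofNat]
    rw [hC2]
    ext n
    rw [map_add, PowerSeries.coeff_rescale, PowerSeries.coeff_C_mul, coeff_sqSubst, hf,
      PowerSeries.coeff_mk]
    rcases Nat.even_or_odd n with ⟨m, rfl⟩ | ⟨m, rfl⟩
    · rw [if_pos ⟨m, by ring⟩, (by omega : (m + m) / 2 = m), Even.neg_one_pow ⟨m, rfl⟩,
        PowerSeries.coeff_mk, (by push_cast; ring : ((m + m : ℕ) : ℚ) = 2 * (m : ℚ)), mul_pow]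
      ring
    · rw [if_neg (by omega), Odd.neg_one_pow ⟨m, rfl⟩]
      ring
  have hEc : (((2 : Polynomial ℚ) ^ (ℓ + 1) * A.comp (Polynomial.X ^ 2) : Polynomial ℚ) : PowerSeries ℚ)
      = (((1 + Polynomial.X) ^ (ℓ + 1) * A
          + (1 - Polynomial.X) ^ (ℓ + 1) * A.comp (-Polynomial.X) : Polynomial ℚ) : PowerSeries ℚ) := by
    have hc2 : ((2 : Polynomial ℚ) : PowerSeries ℚ) = (2 : PowerSeries ℚ) := by
      rw [(map_ofNat Polynomial.C 2).symm, Polynomial.coe_C, map_ofNat]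
    rw [Polynomial.coe_add, Polynomial.coe_mul, Polynomial.coe_mul, Polynomial.coe_mul,
      Polynomial.coe_pow, Polynomial.coe_pow, Polynomial.coe_pow, Polynomial.coe_add,
      Polynomial.coe_sub, Polynomial.coe_one, Polynomial.coe_X, hc2, h1, h2, hA]
    have fact : ((1 : PowerSeries ℚ) - PowerSeries.X ^ 2) ^ (ℓ + 1)
        = (1 - PowerSeries.X) ^ (ℓ + 1) * (1 + PowerSeries.X) ^ (ℓ + 1) := by
      rw [← mul_pow]
      congr 1
      ring
    rw [fact]
    linear_combination (-((1 - PowerSeries.X) ^ (ℓ + 1) * (1 + PowerSeries.X) ^ (ℓ + 1))) * key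
  have E : (2 : Polynomial ℚ) ^ (ℓ + 1) * A.comp (Polynomial.X ^ 2)
      = (1 + Polynomial.X) ^ (ℓ + 1) * A
          + (1 - Polynomial.X) ^ (ℓ + 1) * A.comp (-Polynomial.X) :=
    Polynomial.coe_inj.mp hEc
  have hneg : ((1 : Polynomial ℚ) - Polynomial.X) ^ (ℓ + 1)
      = (-1) ^ (ℓ + 1) * (Polynomial.X - 1) ^ (ℓ + 1) := by
    rw [← neg_sub, neg_pow]
  rw [hneg] at E
  have hc : Polynomial.C ((2 : ℚ))⁻¹ * 2 = 1 := by
    rw [(map_ofNat Polynomial.C 2).symm, ← Polynomial.C_mul]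
    norm_num
  have hc' : (Polynomial.C ((2 : ℚ))⁻¹) ^ (ℓ + 1) * (2 : Polynomial ℚ) ^ (ℓ + 1) = 1 := by
    rw [← mul_pow, hc, one_pow]
  refine ⟨(-1) ^ (ℓ + 1) * (Polynomial.C ((2 : ℚ))⁻¹) ^ (ℓ + 1) * A.comp (-Polynomial.X), ?_⟩
  rw [mul_pow]
  linear_combination (Polynomial.C ((2 : ℚ))⁻¹) ^ (ℓ + 1) * E
    - A.comp (Polynomial.X ^ 2) * hc'
end

section
/- For all ℓ, m ≥ 2, the Eulerian polynomial satisfies A_ℓ(x^m) ≡ ((1 + x + x² + ⋯ + x^{m-1})/m)^{ℓ+1} · A_ℓ(x) mod (x-1)^{ℓ+1} in ℚ[x]. -/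
open PowerSeries Polynomial Finset

namespace EulerianAux

/-- exactly one residue in `[0,m)` satisfies `m ∣ N - r`. -/
lemma sum_indicator (m : ℕ) (hm : 0 < m) (N : ℤ) :
    ∑ r ∈ Finset.range m, (if (m:ℤ) ∣ (N - (r:ℤ)) then (1:ℚ) else 0) = 1 := by
  have hm' : (0:ℤ) < m := by exact_mod_cast hm
  have h0 : 0 ≤ N % m := Int.emod_nonneg N hm'.ne'
  have h1 : N % m < m := Int.emod_lt_of_pos N hm'
  set r0 : ℕ := (N % m).toNat with hr0def
  have hr0 : (r0 : ℤ) = N % m := Int.toNat_of_nonneg h0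
  have hmem : r0 ∈ Finset.range m := by
    rw [Finset.mem_range]
    exact_mod_cast hr0 ▸ h1
  have hcond : ∀ r ∈ Finset.range m, ((m:ℤ) ∣ (N - (r:ℤ))) ↔ r = r0 := by
    intro r hr
    rw [Finset.mem_range] at hr
    constructor
    · intro hdvd
      have : N % m = (r:ℤ) % m :=
        Int.emod_eq_emod_iff_emod_sub_eq_zero.2 (Int.emod_eq_zero_of_dvd hdvd)
      have hrm : (r:ℤ) % m = r := Int.emod_eq_of_lt (by positivity) (by exact_mod_cast hr)
      have : (r0 : ℤ) = (r:ℤ) := by rw [hr0, this, hrm]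
      exact_mod_cast this.symm
    · rintro rfl
      have : N - (r0:ℤ) = N - N % m := by rw [hr0]
      rw [this]
      exact Int.dvd_self_sub_of_emod_eq rfl
  calc ∑ r ∈ Finset.range m, (if (m:ℤ) ∣ (N - (r:ℤ)) then (1:ℚ) else 0)
      = ∑ r ∈ Finset.range m, (if r = r0 then (1:ℚ) else 0) := by
        refine Finset.sum_congr rfl fun r hr => ?_
        simp [hcond r hr]
    _ = 1 := by rw [Finset.sum_ite_eq' (Finset.range m) r0 (fun _ => (1:ℚ))]; simp [hmem]




variable (m : ℕ)

/-- The averaging operator. -/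
def Pop (g : ℤ → ℚ) : ℤ → ℚ := fun N => ∑ i ∈ Finset.range m, g (N - (i:ℤ))

/-- The basic family of functions. -/
def fa (a : Polynomial ℚ) : ℤ → ℚ :=
  fun k => ((if (m:ℤ) ∣ k then (m:ℚ) else 0) - 1) * a.eval ((k : ℚ) / m)

lemma Pop_iterate_sum (j : ℕ) (c : ℕ → ℚ) (g : ℕ → ℤ → ℚ) :
    (Pop m)^[j] (fun N => ∑ r ∈ Finset.range m, c r * g r (N - (r:ℤ))) =
    fun N => ∑ r ∈ Finset.range m, c r * ((Pop m)^[j] (g r)) (N - (r:ℤ)) := by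
  induction j generalizing g with
  | zero => rfl
  | succ j ih =>
    rw [Function.iterate_succ_apply]
    have h1 : Pop m (fun N => ∑ r ∈ Finset.range m, c r * g r (N - (r:ℤ))) =
        fun N => ∑ r ∈ Finset.range m, c r * (Pop m (g r)) (N - (r:ℤ)) := by
      funext N
      show ∑ i ∈ Finset.range m, ∑ r ∈ Finset.range m, c r * g r (N - (i:ℤ) - (r:ℤ))
          = ∑ r ∈ Finset.range m, c r * ∑ i ∈ Finset.range m, g r (N - (r:ℤ) - (i:ℤ))
      rw [Finset.sum_comm]
      refine Finset.sum_congr rfl fun r _ => ?_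
      rw [Finset.mul_sum]
      refine Finset.sum_congr rfl fun i _ => ?_
      congr 1
      ring_nf
    rw [h1, ih]
    rfl

lemma taylor_coeff_of_natDegree_le (a : Polynomial ℚ) (c : ℚ) (n : ℕ) (h : a.natDegree ≤ n) :
    (Polynomial.taylor c a).coeff n = a.coeff n := by
  rw [Polynomial.taylor_coeff]
  have hc : Polynomial.hasseDeriv n a = Polynomial.C (a.coeff n) := by
    ext j
    rw [Polynomial.hasseDeriv_coeff, Polynomial.coeff_C]
    cases j with
    | zero => simp
    | succ j =>
      have : a.coeff (j + 1 + n) = 0 :=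
        Polynomial.coeff_eq_zero_of_natDegree_lt (by omega)
      simp [this]
  rw [hc, Polynomial.eval_C]

lemma key (hm : 0 < m) : ∀ (e : ℕ) (a : Polynomial ℚ), a.natDegree ≤ e →
    ∀ N : ℤ, (Pop m)^[e+1] (fa m a) N = 0 := by
  have hm0 : (m:ℚ) ≠ 0 := by positivity
  intro e
  induction e with
  | zero =>
    intro a ha N
    obtain ⟨c, rfl⟩ : ∃ c, a = Polynomial.C c :=
      ⟨a.coeff 0, (Polynomial.eq_C_of_natDegree_le_zero ha)⟩
    show ∑ i ∈ Finset.range m,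
      ((if (m:ℤ) ∣ (N - (i:ℤ)) then (m:ℚ) else 0) - 1) * ((Polynomial.C c).eval _) = 0
    have : ∀ i ∈ Finset.range m,
        ((if (m:ℤ) ∣ (N - (i:ℤ)) then (m:ℚ) else 0) - 1) * ((Polynomial.C c).eval ((↑(N - (i:ℤ)) : ℚ) / m))
        = ((m:ℚ) * (if (m:ℤ) ∣ (N - (i:ℤ)) then (1:ℚ) else 0) - 1) * c := by
      intro i _
      rw [Polynomial.eval_C]
      congr 2
      split_ifs <;> ring
    rw [Finset.sum_congr rfl this]
    have hs := sum_indicator m hm N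
    simp only [sub_mul, one_mul, mul_assoc]
    rw [Finset.sum_sub_distrib, ← Finset.mul_sum, ← Finset.sum_mul, hs]
    simp only [Finset.sum_const, Finset.card_range, nsmul_eq_mul]
    ring
  | succ e ih =>
    intro a ha N
    set S : ℕ → Polynomial ℚ := fun r =>
      Polynomial.C (m:ℚ) * a - ∑ i ∈ Finset.range m,
        Polynomial.taylor (((r:ℚ) - (i:ℚ)) / m) a with hSdef
    have hdeg : ∀ r, (S r).natDegree ≤ e := by
      intro r
      rw [Polynomial.natDegree_le_iff_coeff_eq_zero]
      intro k hk
      have hak : a.natDegree ≤ k := le_trans ha hk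
      rw [hSdef]
      simp only [Polynomial.coeff_sub, Polynomial.coeff_C_mul, Polynomial.finset_sum_coeff]
      rw [Finset.sum_congr rfl (fun i _ => taylor_coeff_of_natDegree_le a _ k hak)]
      simp [Finset.sum_const, Finset.card_range]
    have hdecomp : Pop m (fa m a) =
        fun N => ∑ r ∈ Finset.range m, (1/(m:ℚ)) * fa m (S r) (N - (r:ℤ)) := by
      funext N
      have hT : ∀ r ∈ Finset.range m,
          (S r).eval (((N:ℚ) - (r:ℚ)) / m)
          = (m:ℚ) * a.eval (((N:ℚ) - (r:ℚ)) / m)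
            - ∑ i ∈ Finset.range m, a.eval (((N:ℚ) - (i:ℚ)) / m) := by
        intro r _
        rw [hSdef]
        simp only [Polynomial.eval_sub, Polynomial.eval_mul, Polynomial.eval_C,
          Polynomial.eval_finset_sum]
        congr 1
        refine Finset.sum_congr rfl fun i _ => ?_
        rw [Polynomial.taylor_eval, ← add_div]
        congr 1
        ring
      set T : ℚ := ∑ i ∈ Finset.range m, a.eval (((N:ℚ) - (i:ℚ)) / m) with hTdef
      have harg : ∀ i : ℕ, ((↑(N - (i:ℤ)) : ℚ) / m) = ((N:ℚ) - (i:ℚ)) / m := by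
        intro i; push_cast; ring
      -- LHS
      show ∑ i ∈ Finset.range m, fa m a (N - (i:ℤ)) = _
      have hL : ∀ i ∈ Finset.range m, fa m a (N - (i:ℤ)) =
          ((if (m:ℤ) ∣ (N - (i:ℤ)) then (m:ℚ) else 0) - 1) * a.eval (((N:ℚ) - (i:ℚ)) / m) := by
        intro i _
        unfold fa
        rw [harg]
      have hR : ∀ r ∈ Finset.range m, (1/(m:ℚ)) * fa m (S r) (N - (r:ℤ)) =
          ((if (m:ℤ) ∣ (N - (r:ℤ)) then (m:ℚ) else 0) - 1) * a.eval (((N:ℚ) - (r:ℚ)) / m)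
          - ((1/(m:ℚ)) * T) * (((m:ℚ) * (if (m:ℤ) ∣ (N - (r:ℤ)) then (1:ℚ) else 0)) - 1) := by
        intro r hr
        unfold fa
        rw [harg, hT r hr]
        split_ifs <;> field_simp <;> ring
      rw [Finset.sum_congr rfl hL, Finset.sum_congr rfl hR, Finset.sum_sub_distrib]
      rw [← Finset.mul_sum]
      have : ∑ r ∈ Finset.range m, (((m:ℚ) * (if (m:ℤ) ∣ (N - (r:ℤ)) then (1:ℚ) else 0)) - 1) = 0 := by
        rw [Finset.sum_sub_distrib, ← Finset.mul_sum, sum_indicator m hm N]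
        simp [Finset.card_range]
      rw [this, mul_zero, sub_zero]
    have : (Pop m)^[e+1+1] (fa m a) N = (Pop m)^[e+1] (Pop m (fa m a)) N := by
      rw [Function.iterate_succ_apply]
    rw [this, hdecomp, Pop_iterate_sum]
    refine Finset.sum_eq_zero fun r _ => ?_
    rw [ih (S r) (hdeg r)]
    ring



lemma coeff_one_sub_pow_mul (s k : ℕ) (h : ℕ → ℚ) (n : ℕ) :
    (PowerSeries.coeff (R := ℚ) n) ((1 - PowerSeries.X ^ s) ^ k * PowerSeries.mk h) =
    ∑ j ∈ Finset.range (k+1), (-1:ℚ)^j * (k.choose j) *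
      (if s*j ≤ n then h (n - s*j) else 0) := by
  have hb : ((1 - PowerSeries.X ^ s : PowerSeries ℚ)) ^ k
      = ∑ j ∈ Finset.range (k+1),
          PowerSeries.C (R := ℚ) ((-1:ℚ)^j * (k.choose j)) * (PowerSeries.X) ^ (s*j) := by
    rw [sub_eq_add_neg, add_comm, add_pow]
    refine Finset.sum_congr rfl fun j hj => ?_
    rw [one_pow, mul_one, neg_pow, ← pow_mul, map_mul, ← map_natCast (PowerSeries.C (R := ℚ)) (k.choose j)]
    have hneg : (PowerSeries.C (R := ℚ)) ((-1:ℚ)^j) = (-1 : PowerSeries ℚ)^j := by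
      rw [map_pow, map_neg, map_one]
    rw [hneg]
    ring
  rw [hb, Finset.sum_mul, map_sum]
  refine Finset.sum_congr rfl fun j hj => ?_
  rw [mul_assoc, PowerSeries.coeff_C_mul, PowerSeries.coeff_X_pow_mul']
  split_ifs with hle
  · rw [PowerSeries.coeff_mk]
  · rw [mul_zero]

lemma coeffA (ℓ : ℕ) (A : Polynomial ℚ)
    (hA : (A : PowerSeries ℚ) =
      (1 - PowerSeries.X) ^ (ℓ + 1) * PowerSeries.mk (fun n => (n : ℚ) ^ ℓ)) (q : ℕ) :
    A.coeff q = ∑ j ∈ Finset.range (ℓ+2), (-1:ℚ)^j * ((ℓ+1).choose j) *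
      (if j ≤ q then ((q - j : ℕ):ℚ)^ℓ else 0) := by
  have h1 := congrArg (PowerSeries.coeff (R := ℚ) q) hA
  rw [Polynomial.coeff_coe] at h1
  rw [h1, show (1 - PowerSeries.X : PowerSeries ℚ) = 1 - PowerSeries.X ^ 1 by rw [pow_one],
    coeff_one_sub_pow_mul]
  simp only [one_mul]

lemma coe_comp_eq (ℓ m : ℕ) (hm : 0 < m) (A : Polynomial ℚ)
    (hA : (A : PowerSeries ℚ) =
      (1 - PowerSeries.X) ^ (ℓ + 1) * PowerSeries.mk (fun n => (n : ℚ) ^ ℓ)) :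
    ((A.comp (Polynomial.X ^ m) : Polynomial ℚ) : PowerSeries ℚ)
    = (1 - PowerSeries.X ^ m)^(ℓ+1)
        * PowerSeries.mk (fun n => if m ∣ n then ((n / m : ℕ) : ℚ)^ℓ else 0) := by
  ext n
  rw [Polynomial.coeff_coe, ← Polynomial.expand_eq_comp_X_pow, Polynomial.coeff_expand hm,
    coeff_one_sub_pow_mul]
  by_cases h : m ∣ n
  · obtain ⟨q, rfl⟩ := h
    rw [if_pos (Dvd.intro q rfl)]
    have hnq : m * q / m = q := Nat.mul_div_cancel_left q hm
    rw [hnq, coeffA ℓ A hA q]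
    refine Finset.sum_congr rfl fun j hj => ?_
    congr 1
    by_cases hjq : j ≤ q
    · rw [if_pos (Nat.mul_le_mul_left m hjq), if_pos hjq, if_pos]
      · congr 1
        rw [← Nat.mul_sub_left_distrib, Nat.mul_div_cancel_left _ hm]
      · exact ⟨q - j, by rw [← Nat.mul_sub_left_distrib]⟩
    · have h1 : ¬ (m*j ≤ m*q) := fun hc => hjq (Nat.le_of_mul_le_mul_left hc hm)
      rw [if_neg h1, if_neg hjq]
  · rw [if_neg h]
    symm
    refine Finset.sum_eq_zero fun j hj => ?_
    by_cases hj2 : m*j ≤ n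
    · rw [if_pos hj2, if_neg, mul_zero]
      intro hd
      exact h (by
        have : n = (n - m*j) + m*j := by omega
        rw [this]
        exact dvd_add hd (Dvd.intro j rfl))
    · rw [if_neg hj2, mul_zero]

lemma coeff_VS_pow_mul (m : ℕ) (hm : 0 < m) (g : ℤ → ℚ) :
    ∀ (j N : ℕ), j * (m-1) ≤ N →
    (PowerSeries.coeff (R := ℚ) N) ((∑ i ∈ Finset.range m, PowerSeries.X ^ i)^j
        * PowerSeries.mk (fun n => g (n:ℤ)))
      = (Pop m)^[j] g (N:ℤ) := by
  intro j
  induction j with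
  | zero => intro N _; simp
  | succ j ih =>
    intro N hN
    have hexp : (j+1)*(m-1) = j*(m-1) + (m-1) := by ring
    have hstep : ((∑ i ∈ Finset.range m, PowerSeries.X ^ i : PowerSeries ℚ))^(j+1)
        * PowerSeries.mk (fun n => g (n:ℤ))
        = ∑ i ∈ Finset.range m, PowerSeries.X ^ i *
            ((∑ i ∈ Finset.range m, PowerSeries.X ^ i)^j * PowerSeries.mk (fun n => g (n:ℤ))) := by
      rw [← Finset.sum_mul]
      ring
    rw [hstep, map_sum, Function.iterate_succ_apply']
    show _ = ∑ i ∈ Finset.range m, (Pop m)^[j] g ((N:ℤ) - (i:ℤ))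
    refine Finset.sum_congr rfl fun i hi => ?_
    rw [Finset.mem_range] at hi
    have him : i ≤ N := by omega
    have harg : j * (m-1) ≤ N - i := by omega
    have hcast : ((N - i : ℕ) : ℤ) = (N:ℤ) - (i:ℤ) := by omega
    rw [PowerSeries.coeff_X_pow_mul', if_pos him, ih (N - i) harg, hcast]

end EulerianAux

/-- For `ℓ, m ≥ 2`, the Eulerian polynomial satisfies
`A_ℓ(x^m) ≡ ((1+x+⋯+x^{m-1})/m)^{ℓ+1}·A_ℓ(x) mod (x-1)^{ℓ+1}` in `ℚ[x]`. -/
theorem eulerian_congruence (ℓ m : ℕ) (hℓ : 2 ≤ ℓ) (hm : 2 ≤ m) (A : Polynomial ℚ)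
    (hA : (A : PowerSeries ℚ) =
      (1 - PowerSeries.X) ^ (ℓ + 1) * PowerSeries.mk (fun n => (n : ℚ) ^ ℓ)) :
    (Polynomial.X - 1) ^ (ℓ + 1) ∣
      A.comp (Polynomial.X ^ m) -
        (Polynomial.C ((m : ℚ))⁻¹ * ∑ i ∈ Finset.range m, Polynomial.X ^ i) ^ (ℓ + 1)
          * A := by
  have hm0 : 0 < m := by omega
  have hmq : (m:ℚ) ≠ 0 := by positivity
  -- power series objects
  set F : PowerSeries ℚ := PowerSeries.mk (fun n => (n:ℚ)^ℓ) with hF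
  set Fm : PowerSeries ℚ := PowerSeries.mk (fun n => if m ∣ n then ((n / m : ℕ) : ℚ)^ℓ else 0)
    with hFm
  set VS : PowerSeries ℚ := ∑ i ∈ Finset.range m, PowerSeries.X ^ i with hVSdef
  set a : Polynomial ℚ := Polynomial.C ((m:ℚ)^ℓ) * Polynomial.X ^ ℓ with hadef
  set G : PowerSeries ℚ := PowerSeries.mk (fun n => EulerianAux.fa m a (n:ℤ)) with hGdef
  set W : PowerSeries ℚ := VS ^ (ℓ+1) * G with hWdef
  set Qp : Polynomial ℚ := PowerSeries.trunc ((ℓ+1) * (m-1)) W with hQpdef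
  have hadeg : a.natDegree ≤ ℓ := by
    rw [hadef]
    exact le_trans (Polynomial.natDegree_C_mul_le _ _) (le_of_eq (Polynomial.natDegree_X_pow ℓ))
  -- W is a polynomial
  have hvanish : ∀ N : ℕ, (ℓ+1) * (m-1) ≤ N → (PowerSeries.coeff (R := ℚ) N) W = 0 := by
    intro N hN
    rw [hWdef, hVSdef, EulerianAux.coeff_VS_pow_mul m hm0 _ (ℓ+1) N hN,
      EulerianAux.key m hm0 ℓ a hadeg]
  have hQ : ((Qp : Polynomial ℚ) : PowerSeries ℚ) = W := by
    ext n
    rw [Polynomial.coeff_coe, hQpdef, PowerSeries.coeff_trunc]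
    split_ifs with h
    · rfl
    · exact (hvanish n (by omega)).symm
  -- G in terms of Fm and F
  have hG : G = PowerSeries.C (R := ℚ) ((m:ℚ)^(ℓ+1)) * Fm - F := by
    ext n
    rw [hGdef, hFm, hF]
    simp only [PowerSeries.coeff_mk, map_sub, PowerSeries.coeff_C_mul, PowerSeries.coeff_mk]
    unfold EulerianAux.fa
    rw [hadef]
    simp only [Polynomial.eval_mul, Polynomial.eval_C, Polynomial.eval_pow, Polynomial.eval_X]
    have hx : (m:ℚ)^ℓ * (((n:ℤ):ℚ)/m)^ℓ = (n:ℚ)^ℓ := by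
      rw [← mul_pow]
      congr 1
      push_cast
      field_simp
    by_cases h : m ∣ n
    · rw [if_pos ((Int.natCast_dvd_natCast).2 h), if_pos h, Nat.cast_div h hmq]
      push_cast
      push_cast at hx
      linear_combination -hx
    · rw [if_neg (fun hc => h ((Int.natCast_dvd_natCast).1 hc)), if_neg h]
      push_cast
      push_cast at hx
      linear_combination -hx
  -- the geometric identity
  have hgeom : (1 - PowerSeries.X ^ m : PowerSeries ℚ) = (1 - PowerSeries.X) * VS := by
    rw [hVSdef]
    linear_combination geom_sum_mul (PowerSeries.X : PowerSeries ℚ) m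
  -- the comp identity
  have hcomp := EulerianAux.coe_comp_eq ℓ m hm0 A hA
  rw [← hFm] at hcomp
  -- coercion of the sum
  have hVS : ((∑ i ∈ Finset.range m, (Polynomial.X:Polynomial ℚ) ^ i : Polynomial ℚ) :
      PowerSeries ℚ) = VS := by
    rw [← Polynomial.coeToPowerSeries.ringHom_apply, map_sum, hVSdef]
    refine Finset.sum_congr rfl fun i _ => ?_
    rw [map_pow]
    simp [Polynomial.coeToPowerSeries.ringHom_apply]
  -- reduce to (1 - X)^(ℓ+1) dvd
  have hdvd2 : ((Polynomial.X : Polynomial ℚ) - 1) ^ (ℓ+1) ∣ ((1:Polynomial ℚ) - Polynomial.X) ^ (ℓ+1) :=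
    pow_dvd_pow_of_dvd ⟨-1, by ring⟩ (ℓ+1)
  refine dvd_trans hdvd2 ⟨Polynomial.C ((m:ℚ)⁻¹) ^ (ℓ+1) * Qp, ?_⟩
  rw [← Polynomial.coe_inj]
  simp only [Polynomial.coe_sub, Polynomial.coe_mul, Polynomial.coe_pow, Polynomial.coe_one,
    Polynomial.coe_X, Polynomial.coe_C]
  have hgeom2 : ((1 : PowerSeries ℚ) - PowerSeries.X ^ m)^(ℓ+1)
      = ((1 : PowerSeries ℚ) - PowerSeries.X)^(ℓ+1) * VS^(ℓ+1) := by
    rw [hgeom, mul_pow]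
  rw [hVS, hcomp, hA, hQ, hWdef, hG, hgeom2, mul_pow]
  have huv : (PowerSeries.C (R := ℚ) ((m:ℚ)⁻¹)) ^ (ℓ+1) * PowerSeries.C (R := ℚ) ((m:ℚ)^(ℓ+1)) = 1 := by
    rw [← map_pow, ← map_mul, ← mul_pow, inv_mul_cancel₀ hmq, one_pow, map_one]
  linear_combination (-((1 - PowerSeries.X : PowerSeries ℚ))^(ℓ+1) * VS^(ℓ+1) * Fm) * huv
end

section
/- For m ≥ 2 and ℓ ≥ 1, the power series P(x) = (1 + x + ⋯ + x^{m-1})^{ℓ+1} · ( m·Σ_{k≥1} (mk)^ℓ x^{mk} − Σ_{k≥1} k^ℓ x^k ) is a polynomial; explicitly P(x) = Σ_{j=1}^{m-1} (∏_{1≤i≤m-1, i≠j} (1 - ζ_m^i x)^{ℓ+1}) · A_ℓ(ζ_m^j x), where ζ_m = e^{2πi/m}. -/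
open PowerSeries Polynomial Finset

private lemma prod_one_sub_zeta_pow {m : ℕ} (hm : 0 < m) {ζ : ℂ} (hζ : IsPrimitiveRoot ζ m) :
    ∏ i ∈ Finset.range m, (1 - Polynomial.C (ζ ^ i) * Polynomial.X) =
      1 - Polynomial.X ^ m := by
  have himg : Polynomial.nthRootsFinset m (1 : ℂ) = (Finset.range m).image (ζ ^ ·) := by
    symm
    apply Finset.eq_of_subset_of_card_le
    · intro x hx
      simp only [Finset.mem_image, Finset.mem_range] at hx
      obtain ⟨i, hi, rfl⟩ := hx
      rw [Polynomial.mem_nthRootsFinset hm (1 : ℂ), ← pow_mul, mul_comm, pow_mul, hζ.pow_eq_one, one_pow]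
    · rw [hζ.card_nthRootsFinset, Finset.card_image_of_injOn]
      · simp
      · intro i hi j hj h
        exact hζ.pow_inj (Finset.mem_range.mp hi) (Finset.mem_range.mp hj) h
  have hfact : (Polynomial.X : ℂ[X]) ^ m - 1 =
      ∏ i ∈ Finset.range m, (Polynomial.X - Polynomial.C (ζ ^ i)) := by
    rw [X_pow_sub_one_eq_prod hm hζ, himg, Finset.prod_image]
    intro i hi j hj h
    exact hζ.pow_inj (Finset.mem_range.mp hi) (Finset.mem_range.mp hj) h
  have hkey : ∀ y : ℂ, ∏ i ∈ Finset.range m, (y - ζ ^ i) = y ^ m - 1 := by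
    intro y
    have := congrArg (Polynomial.eval y) hfact
    simpa [Polynomial.eval_prod] using this.symm
  apply Polynomial.funext
  intro x
  simp only [Polynomial.eval_prod, Polynomial.eval_sub, Polynomial.eval_one,
    Polynomial.eval_mul, Polynomial.eval_C, Polynomial.eval_X, Polynomial.eval_pow]
  rcases eq_or_ne x 0 with rfl | hx
  · simp [hm.ne']
  · have h1 : ∀ i : ℕ, 1 - ζ ^ i * x = x * (x⁻¹ - ζ ^ i) := by
      intro i
      field_simp
    calc ∏ i ∈ Finset.range m, (1 - ζ ^ i * x)
        = ∏ i ∈ Finset.range m, (x * (x⁻¹ - ζ ^ i)) :=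
          Finset.prod_congr rfl fun i _ => h1 i
      _ = x ^ m * ((x⁻¹) ^ m - 1) := by
          rw [Finset.prod_mul_distrib, Finset.prod_const, Finset.card_range, hkey]
      _ = 1 - x ^ m := by
          rw [mul_sub, ← mul_pow, mul_inv_cancel₀ hx]
          simp

private lemma coe_comp_C_mul_X (c : ℂ) (p : ℂ[X]) :
    ((p.comp (Polynomial.C c * Polynomial.X) : ℂ[X]) : PowerSeries ℂ) =
      PowerSeries.rescale c (p : PowerSeries ℂ) := by
  induction p using Polynomial.induction_on' with
  | add p q hp hq => simp [Polynomial.add_comp, hp, hq]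
  | monomial k a =>
    rw [Polynomial.monomial_comp]
    ext n
    simp only [Polynomial.coeff_coe, PowerSeries.coeff_rescale, mul_pow, ← Polynomial.C_pow,
      ← mul_assoc, ← Polynomial.C_mul, Polynomial.coeff_C_mul, Polynomial.coeff_X_pow,
      Polynomial.coeff_monomial]
    rcases eq_or_ne n k with rfl | h
    · simp [mul_comm]
    · simp [h, Ne.symm h]

private lemma zeta_sum_eq {m : ℕ} (hm : 2 ≤ m) {ζ : ℂ} (hζ : IsPrimitiveRoot ζ m) (n : ℕ) :
    ∑ j ∈ Finset.Icc 1 (m - 1), ((ζ ^ j) ^ n : ℂ) =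
      (if m ∣ n then (m : ℂ) else 0) - 1 := by
  have h1m : 1 ≤ m := le_trans (by norm_num) hm
  have hIcc : Finset.Icc 1 (m - 1) = Finset.Ico 1 m := by
    rw [← Finset.Ico_add_one_right_eq_Icc, Nat.sub_add_cancel h1m]
  have hsplit : ∑ j ∈ Finset.range m, ((ζ ^ n) ^ j : ℂ) =
      1 + ∑ j ∈ Finset.Ico 1 m, ((ζ ^ n) ^ j : ℂ) := by
    rw [Finset.range_eq_Ico, Finset.sum_eq_sum_Ico_succ_bot (by omega)]
    simp
  have hcomm : ∀ j : ℕ, ((ζ ^ j) ^ n : ℂ) = (ζ ^ n) ^ j := fun j => by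
    rw [← pow_mul, mul_comm, pow_mul]
  have hrange : ∑ j ∈ Finset.range m, ((ζ ^ n) ^ j : ℂ) =
      if m ∣ n then (m : ℂ) else 0 := by
    by_cases hd : m ∣ n
    · rw [if_pos hd]
      have : (ζ : ℂ) ^ n = 1 := (hζ.pow_eq_one_iff_dvd n).mpr hd
      simp [this]
    · rw [if_neg hd]
      have hne : (ζ : ℂ) ^ n ≠ 1 := fun h => hd ((hζ.pow_eq_one_iff_dvd n).mp h)
      rw [geom_sum_eq hne]
      have : ((ζ : ℂ) ^ n) ^ m = 1 := by
        rw [← pow_mul, mul_comm, pow_mul, hζ.pow_eq_one, one_pow]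
      rw [this]
      simp
  calc ∑ j ∈ Finset.Icc 1 (m - 1), ((ζ ^ j) ^ n : ℂ)
      = ∑ j ∈ Finset.Ico 1 m, ((ζ ^ n) ^ j : ℂ) := by
        rw [hIcc]; exact Finset.sum_congr rfl fun j _ => hcomm j
    _ = (if m ∣ n then (m : ℂ) else 0) - 1 := by
        rw [← hrange] at *
        rw [hsplit]; ring

private lemma mk_f_eq {m ℓ : ℕ} (hm : 2 ≤ m) {ζ : ℂ} (hζ : IsPrimitiveRoot ζ m) :
    PowerSeries.mk (fun n => (if m ∣ n then (m : ℂ) * (n : ℂ) ^ ℓ else 0) - (n : ℂ) ^ ℓ) =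
      ∑ j ∈ Finset.Icc 1 (m - 1),
        PowerSeries.rescale (ζ ^ j) (PowerSeries.mk fun n => (n : ℂ) ^ ℓ) := by
  ext n
  rw [map_sum, PowerSeries.coeff_mk]
  simp only [PowerSeries.coeff_rescale, PowerSeries.coeff_mk]
  rw [← Finset.sum_mul, zeta_sum_eq hm hζ n]
  by_cases hd : m ∣ n <;> simp [hd, sub_mul]

/-- For `m ≥ 2`, `ℓ ≥ 1` and `ζ` a primitive `m`-th root of unity in `ℂ`, the power
series `P(x) = (1+x+⋯+x^{m-1})^{ℓ+1}·(m·Σ_{k≥1}(mk)^ℓ x^{mk} - Σ_{k≥1} k^ℓ x^k)`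
is the polynomial `Σ_{j=1}^{m-1} (∏_{1≤i≤m-1, i≠j} (1-ζ^i x)^{ℓ+1})·A_ℓ(ζ^j x)`.
Note `m·Σ_{k≥1}(mk)^ℓ x^{mk} - Σ_{k≥1} k^ℓ x^k` has `n`-th coefficient
`(if m ∣ n then m·n^ℓ else 0) - n^ℓ`. -/
theorem P_is_polynomial (ℓ m : ℕ) (hℓ : 1 ≤ ℓ) (hm : 2 ≤ m) (ζ : ℂ)
    (hζ : IsPrimitiveRoot ζ m) (A : Polynomial ℂ)
    (hA : (A : PowerSeries ℂ) =
      (1 - PowerSeries.X) ^ (ℓ + 1) * PowerSeries.mk (fun n => (n : ℂ) ^ ℓ)) :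
    ((∑ i ∈ Finset.range m, PowerSeries.X ^ i : PowerSeries ℂ) ^ (ℓ + 1)) *
        PowerSeries.mk
          (fun n => (if m ∣ n then (m : ℂ) * (n : ℂ) ^ ℓ else 0) - (n : ℂ) ^ ℓ) =
      ((∑ j ∈ Finset.Icc 1 (m - 1),
          (∏ i ∈ (Finset.Icc 1 (m - 1)).erase j,
            (1 - Polynomial.C (ζ ^ i) * Polynomial.X) ^ (ℓ + 1)) *
            A.comp (Polynomial.C (ζ ^ j) * Polynomial.X) : Polynomial ℂ) :
        PowerSeries ℂ) := by
  have hm0 : 0 < m := by omega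
  have h1m : 1 ≤ m := by omega
  have hIcc : Finset.Icc 1 (m - 1) = Finset.Ico 1 m := by
    rw [← Finset.Ico_add_one_right_eq_Icc, Nat.sub_add_cancel h1m]
  -- the polynomial product over `Icc 1 (m-1)` coerced to power series
  have hcoe1 : ∀ i : ℕ, ((1 - Polynomial.C (ζ ^ i) * Polynomial.X : ℂ[X]) : PowerSeries ℂ) =
      1 - PowerSeries.C (ζ ^ i) * PowerSeries.X := by
    intro i
    push_cast
    rfl
  have hcoe_prod : ∀ s : Finset ℕ,
      ((∏ i ∈ s, (1 - Polynomial.C (ζ ^ i) * Polynomial.X) : ℂ[X]) : PowerSeries ℂ) =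
        ∏ i ∈ s, (1 - PowerSeries.C (ζ ^ i) * PowerSeries.X) := by
    intro s
    rw [← Polynomial.coeToPowerSeries.ringHom_apply, map_prod]
    exact Finset.prod_congr rfl fun i _ => hcoe1 i
  -- geometric sum equals product of (1 - ζ^i X) over Icc 1 (m-1)
  have hGpoly : (1 - Polynomial.X) * ∏ i ∈ Finset.Icc 1 (m - 1),
      (1 - Polynomial.C (ζ ^ i) * Polynomial.X) = 1 - Polynomial.X ^ m := by
    rw [← prod_one_sub_zeta_pow hm0 hζ, hIcc, Finset.range_eq_Ico,
      Finset.prod_eq_prod_Ico_succ_bot hm0]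
    simp
  have hone_sub_ne : (1 - PowerSeries.X : PowerSeries ℂ) ≠ 0 := by
    intro h
    have := congrArg (PowerSeries.constantCoeff) h
    simp at this
  have hG : (∑ i ∈ Finset.range m, PowerSeries.X ^ i : PowerSeries ℂ) =
      ∏ i ∈ Finset.Icc 1 (m - 1), (1 - PowerSeries.C (ζ ^ i) * PowerSeries.X) := by
    apply mul_left_cancel₀ hone_sub_ne
    have h2 := congrArg (fun p : ℂ[X] => (p : PowerSeries ℂ)) hGpoly
    simp only [Polynomial.coe_mul, Polynomial.coe_sub, Polynomial.coe_one,
      Polynomial.coe_pow, Polynomial.coe_X, hcoe_prod] at h2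
    rw [h2]
    have h3 := geom_sum_mul (PowerSeries.X : PowerSeries ℂ) m
    have : (1 - PowerSeries.X : PowerSeries ℂ) *
        ∑ i ∈ Finset.range m, PowerSeries.X ^ i =
        -((∑ i ∈ Finset.range m, PowerSeries.X ^ i) * (PowerSeries.X - 1)) := by ring
    rw [this, h3]
    ring
  -- rescaled Eulerian polynomial
  have hAr : ∀ j : ℕ, PowerSeries.rescale (ζ ^ j) (A : PowerSeries ℂ) =
      (1 - PowerSeries.C (ζ ^ j) * PowerSeries.X) ^ (ℓ + 1) *
        PowerSeries.rescale (ζ ^ j) (PowerSeries.mk fun n => (n : ℂ) ^ ℓ) := by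
    intro j
    rw [hA, map_mul, map_pow, map_sub, map_one, PowerSeries.rescale_X]
  rw [mk_f_eq hm hζ, hG, Finset.mul_sum,
    ← Polynomial.coeToPowerSeries.ringHom_apply, map_sum]
  apply Finset.sum_congr rfl
  intro j hj
  rw [map_mul, map_prod, Polynomial.coeToPowerSeries.ringHom_apply,
    coe_comp_C_mul_X, hAr j]
  have herase : ∏ i ∈ Finset.Icc 1 (m - 1), (1 - PowerSeries.C (ζ ^ i) * PowerSeries.X) =
      (1 - PowerSeries.C (ζ ^ j) * PowerSeries.X) *
        ∏ i ∈ (Finset.Icc 1 (m - 1)).erase j,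
          (1 - PowerSeries.C (ζ ^ i) * PowerSeries.X) :=
    (Finset.mul_prod_erase _ _ hj).symm
  rw [herase, mul_pow]
  have hcoe2 : ∀ i ∈ (Finset.Icc 1 (m - 1)).erase j,
      (Polynomial.coeToPowerSeries.ringHom
        ((1 - Polynomial.C (ζ ^ i) * Polynomial.X) ^ (ℓ + 1)) : PowerSeries ℂ) =
        (1 - PowerSeries.C (ζ ^ i) * PowerSeries.X) ^ (ℓ + 1) := by
    intro i _
    rw [map_pow, Polynomial.coeToPowerSeries.ringHom_apply, hcoe1 i]
  rw [Finset.prod_congr rfl hcoe2, ← Finset.prod_pow]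
  ring
end

section
/- If ℓ ≥ 2 is even, then A_ℓ(-1) = 0, and moreover the strengthened congruence A_ℓ(x^m) ≡ ((1 + x + ⋯ + x^{m-1})/m)^{ℓ+1} · A_ℓ(x) mod (x-1)^{ℓ+2} holds for all m ≥ 2. -/
open PowerSeries Polynomial Finset
noncomputable section

/-- The Eulerian polynomials, via the recurrence `A_{n+1} = X((1-X)A_n' + (n+1)A_n)`. -/
def Apoly : ℕ → Polynomial ℚ
  | 0 => 1
  | (n+1) => Polynomial.X * ((1 - Polynomial.X) * derivative (Apoly n) + Polynomial.C ((n : ℚ) + 1) * Apoly n)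

lemma mk_succ_shift (ℓ : ℕ) :
    PowerSeries.mk (fun n => (n : ℚ) ^ (ℓ+1)) =
      PowerSeries.X * d⁄dX ℚ (PowerSeries.mk fun n => (n : ℚ) ^ ℓ) := by
  ext n
  cases n with
  | zero => simp
  | succ n =>
    rw [coeff_succ_X_mul, PowerSeries.coeff_derivative, coeff_mk, coeff_mk]
    push_cast
    ring

lemma Apoly_coe (ℓ : ℕ) :
    ((Apoly ℓ : Polynomial ℚ) : PowerSeries ℚ) =
      (1 - PowerSeries.X) ^ (ℓ + 1) * PowerSeries.mk (fun n => (n : ℚ) ^ ℓ) := by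
  induction ℓ with
  | zero =>
    ext n
    cases n with
    | zero => simp [Apoly]
    | succ n =>
      simp only [Apoly, Polynomial.coe_one, zero_add, pow_one]
      rw [sub_mul, one_mul, map_sub, coeff_succ_X_mul, coeff_mk, coeff_mk]
      cases n <;> simp [PowerSeries.coeff_one]
  | succ ℓ ih =>
    have h1 : PowerSeries.mk (fun n => (n : ℚ) ^ (ℓ+1)) =
        PowerSeries.X * d⁄dX ℚ (PowerSeries.mk fun n => (n : ℚ) ^ ℓ) := mk_succ_shift ℓ
    have hcast : (Polynomial.C ((ℓ : ℚ) + 1) : PowerSeries ℚ) = ((ℓ+1 : ℕ) : PowerSeries ℚ) := by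
      rw [Polynomial.coe_C]
      rw [show ((ℓ : ℚ) + 1) = ((ℓ+1 : ℕ) : ℚ) by push_cast; ring]
      exact map_natCast (PowerSeries.C (R := ℚ)) (ℓ+1)
    have hD1X : d⁄dX ℚ (1 - PowerSeries.X) = -1 := by
      rw [map_sub]; simp
    have h2 : ((derivative (Apoly ℓ) : Polynomial ℚ) : PowerSeries ℚ)
        = (1 - PowerSeries.X)^(ℓ+1) * d⁄dX ℚ (PowerSeries.mk fun n => (n : ℚ) ^ ℓ)
          - ((ℓ+1 : ℕ) : PowerSeries ℚ) * ((1 - PowerSeries.X)^ℓ * (PowerSeries.mk fun n => (n : ℚ) ^ ℓ)) := by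
      rw [← PowerSeries.derivative_coe, ih, Derivation.leibniz, Derivation.leibniz_pow, hD1X]
      simp only [smul_eq_mul, nsmul_eq_mul, Nat.add_sub_cancel]
      ring
    show ((Polynomial.X * ((1 - Polynomial.X) * derivative (Apoly ℓ)
        + Polynomial.C ((ℓ : ℚ) + 1) * Apoly ℓ) : Polynomial ℚ) : PowerSeries ℚ) = _
    rw [Polynomial.coe_mul, Polynomial.coe_add, Polynomial.coe_mul, Polynomial.coe_mul,
      Polynomial.coe_sub, Polynomial.coe_one, Polynomial.coe_X, hcast, h2, ih, h1]
    ring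

lemma Apoly_one : Apoly 1 = Polynomial.X := by
  show Polynomial.X * ((1 - Polynomial.X) * derivative (Apoly 0) + Polynomial.C ((0 : ℚ) + 1) * Apoly 0) = _
  show Polynomial.X * ((1 - Polynomial.X) * derivative 1 + Polynomial.C ((0 : ℚ) + 1) * 1) = _
  simp

lemma Apoly_coeff_zero (ℓ : ℕ) : (Apoly (ℓ+1)).coeff 0 = 0 := by
  simp [Apoly, Polynomial.mul_coeff_zero]

lemma coeff_X_mul' (p : Polynomial ℚ) (k : ℕ) :
    (Polynomial.X * p).coeff k = (k : ℚ) * 0 + (if h : k = 0 then 0 else p.coeff (k-1)) := by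
  cases k with
  | zero => simp [Polynomial.mul_coeff_zero]
  | succ n => simp [Polynomial.coeff_X_mul]

lemma Apoly_coeff_succ (ℓ k : ℕ) :
    (Apoly (ℓ+1)).coeff (k+1) =
      ((k : ℚ)+1) * (Apoly ℓ).coeff (k+1) + (((ℓ : ℚ)+1) - (k : ℚ)) * (Apoly ℓ).coeff k := by
  show (Polynomial.X * ((1 - Polynomial.X) * derivative (Apoly ℓ)
      + Polynomial.C ((ℓ : ℚ) + 1) * Apoly ℓ)).coeff (k+1) = _
  rw [Polynomial.coeff_X_mul]
  rw [Polynomial.coeff_add, Polynomial.coeff_C_mul, sub_mul, one_mul, Polynomial.coeff_sub]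
  rw [Polynomial.coeff_derivative]
  cases k with
  | zero => simp [Polynomial.mul_coeff_zero]; try ring
  | succ n =>
    rw [Polynomial.coeff_X_mul, Polynomial.coeff_derivative]
    push_cast
    ring

lemma Apoly_vanish : ∀ ℓ k, ℓ + 1 ≤ k → (Apoly ℓ).coeff k = 0 := by
  intro ℓ
  induction ℓ with
  | zero =>
    intro k hk
    show (1 : Polynomial ℚ).coeff k = 0
    rw [Polynomial.coeff_one]
    simp [show k ≠ 0 by omega]
  | succ ℓ ih =>
    intro k hk
    obtain ⟨j, rfl⟩ : ∃ j, k = j + 1 := ⟨k - 1, by omega⟩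
    rw [Apoly_coeff_succ, ih (j+1) (by omega), ih j (by omega)]
    ring

lemma Apoly_sym : ∀ ℓ, 1 ≤ ℓ → ∀ k, k ≤ ℓ+1 → (Apoly ℓ).coeff k = (Apoly ℓ).coeff (ℓ+1-k) := by
  intro ℓ
  induction ℓ with
  | zero => omega
  | succ ℓ ih =>
    intro _ k hk
    by_cases hℓ0 : ℓ = 0
    · subst hℓ0
      rw [show Apoly 1 = Polynomial.X from Apoly_one]
      interval_cases k <;> simp [Polynomial.coeff_X]
    have hℓ1 : 1 ≤ ℓ := by omega
    have htop : (Apoly (ℓ+1)).coeff (ℓ+2) = 0 := by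
      rw [show ℓ+2 = (ℓ+1)+1 by ring, Apoly_coeff_succ,
        Apoly_vanish ℓ (ℓ+2) (by omega), Apoly_vanish ℓ (ℓ+1) (by omega)]
      ring
    rcases Nat.eq_zero_or_pos k with hk0 | hkpos
    · subst hk0
      rw [Apoly_coeff_zero, show ℓ+1+1-0 = ℓ+2 by omega, htop]
    obtain ⟨j, rfl⟩ : ∃ j, k = j + 1 := ⟨k - 1, by omega⟩
    by_cases hj : j = ℓ + 1
    · subst hj
      rw [show ℓ+1+1-(ℓ+1+1) = 0 by omega, Apoly_coeff_zero,
        show ℓ+1+1 = ℓ+2 by omega]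
      exact htop
    have hjℓ : j ≤ ℓ := by omega
    rw [show ℓ+1+1-(j+1) = (ℓ-j)+1 by omega, Apoly_coeff_succ, Apoly_coeff_succ]
    have e1 : (Apoly ℓ).coeff (ℓ-j+1) = (Apoly ℓ).coeff j := by
      rw [ih hℓ1 (ℓ-j+1) (by omega), show ℓ+1-(ℓ-j+1) = j by omega]
    have e2 : (Apoly ℓ).coeff (ℓ-j) = (Apoly ℓ).coeff (j+1) := by
      rw [ih hℓ1 (ℓ-j) (by omega), show ℓ+1-(ℓ-j) = j+1 by omega]
    rw [e1, e2, ih hℓ1 (j+1) (by omega), show ℓ+1-(j+1) = ℓ-j by omega]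
    have hc : ((ℓ-j : ℕ) : ℚ) = (ℓ : ℚ) - (j : ℚ) := by
      rw [Nat.cast_sub hjℓ]
    rw [hc]
    ring

local notation "E" => PowerSeries.exp ℚ

def Userie : PowerSeries ℚ := PowerSeries.mk fun n => (1 : ℚ)/(Nat.factorial (n+1) : ℚ)
def Rserie : PowerSeries ℚ := PowerSeries.mk fun n => -(_root_.bernoulli (n+1))/(Nat.factorial (n+1) : ℚ)

lemma X_mul_U : PowerSeries.X * Userie = E - 1 := by
  ext n
  cases n with
  | zero => simp [PowerSeries.coeff_zero_X_mul, PowerSeries.coeff_exp]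
  | succ n =>
    rw [coeff_succ_X_mul, map_sub]
    simp [Userie, PowerSeries.coeff_exp, PowerSeries.coeff_one]

lemma bps_eq : bernoulliPowerSeries ℚ = 1 - PowerSeries.X * Rserie := by
  ext n
  cases n with
  | zero => simp [bernoulliPowerSeries, PowerSeries.coeff_one, PowerSeries.coeff_zero_X_mul]
  | succ n =>
    rw [map_sub, coeff_succ_X_mul]
    simp [bernoulliPowerSeries, Rserie, PowerSeries.coeff_one]
    ring

lemma one_sub_E_mul : (1 - E) * (PowerSeries.X * Rserie - 1) = PowerSeries.X := by
  have h := bernoulliPowerSeries_mul_exp_sub_one ℚ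
  rw [bps_eq] at h
  linear_combination h

lemma deriv_E : d⁄dX ℚ E = E := by
  ext n
  rw [PowerSeries.coeff_derivative]
  simp only [PowerSeries.coeff_exp, Algebra.algebraMap_self_apply]
  rw [Nat.factorial_succ]
  have h0 : ((Nat.factorial n : ℕ) : ℚ) ≠ 0 := by exact_mod_cast Nat.factorial_ne_zero n
  have h1 : ((n:ℚ)+1) ≠ 0 := by positivity
  push_cast
  field_simp

lemma constCoeff_U : PowerSeries.constantCoeff Userie = 1 := by
  rw [← PowerSeries.coeff_zero_eq_constantCoeff_apply]
  simp [Userie]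

lemma U_add_X_mul_dU : Userie + PowerSeries.X * (d⁄dX ℚ Userie) = E := by
  have h := congrArg (d⁄dX ℚ) X_mul_U
  rw [map_sub, Derivation.leibniz, deriv_E, PowerSeries.derivative_X,
    Derivation.map_one_eq_zero] at h
  simp only [smul_eq_mul, mul_one, sub_zero] at h
  linear_combination h

lemma key_aeval : ∀ ℓ : ℕ,
    Polynomial.aeval E (Apoly ℓ) =
      PowerSeries.C (Nat.factorial ℓ : ℚ) * Userie^(ℓ+1)
        + (1 - E)^(ℓ+1) * ((d⁄dX ℚ)^[ℓ] Rserie) := by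
  intro ℓ
  induction ℓ with
  | zero =>
    have hq : PowerSeries.X * ((1 - E) * Rserie) = PowerSeries.X * (1 - Userie) := by
      linear_combination one_sub_E_mul + X_mul_U
    have hq2 : (1 - E) * Rserie = 1 - Userie :=
      mul_left_cancel₀ PowerSeries.X_ne_zero hq
    show Polynomial.aeval E (1 : Polynomial ℚ) = _
    simp only [map_one, Function.iterate_zero, id_eq, pow_one, Nat.factorial_zero,
      Nat.cast_one]
    rw [one_mul, pow_one, pow_one, hq2]
    ring
  | succ ℓ ih =>
    have h2 : PowerSeries.X * (d⁄dX ℚ Userie) = E - Userie := by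
      linear_combination U_add_X_mul_dU
    have hiter : (d⁄dX ℚ)^[ℓ+1] Rserie = d⁄dX ℚ ((d⁄dX ℚ)^[ℓ] Rserie) :=
      Function.iterate_succ_apply' _ _ _
    have hchain : E * Polynomial.aeval E (derivative (Apoly ℓ)) =
        d⁄dX ℚ (Polynomial.aeval E (Apoly ℓ)) := by
      rw [Derivation.map_aeval, deriv_E, smul_eq_mul]; ring
    have hL : Polynomial.aeval E (Apoly (ℓ+1)) =
        (1 - E) * d⁄dX ℚ (Polynomial.aeval E (Apoly ℓ))
          + PowerSeries.C ((ℓ:ℚ)+1) * (E * Polynomial.aeval E (Apoly ℓ)) := by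
      rw [show Apoly (ℓ+1) = Polynomial.X * ((1 - Polynomial.X) * derivative (Apoly ℓ)
        + Polynomial.C ((ℓ:ℚ)+1) * Apoly ℓ) from rfl]
      rw [map_mul, map_add, map_mul, map_mul, map_sub, map_one, Polynomial.aeval_X,
        Polynomial.aeval_C, PowerSeries.algebraMap_apply, Algebra.algebraMap_self_apply, ← hchain]
      ring
    have hd1E : d⁄dX ℚ (1 - E) = -E := by
      rw [map_sub, Derivation.map_one_eq_zero, deriv_E]; ring
    have hDΦ : d⁄dX ℚ (Polynomial.aeval E (Apoly ℓ)) =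
        PowerSeries.C (Nat.factorial ℓ : ℚ) * (((ℓ+1:ℕ) : PowerSeries ℚ)
            * (Userie^ℓ * (d⁄dX ℚ Userie)))
          + (((ℓ+1:ℕ) : PowerSeries ℚ) * ((1-E)^ℓ * (-E)) * ((d⁄dX ℚ)^[ℓ] Rserie)
            + (1-E)^(ℓ+1) * d⁄dX ℚ ((d⁄dX ℚ)^[ℓ] Rserie)) := by
      rw [ih, map_add, Derivation.leibniz, Derivation.leibniz, Derivation.leibniz_pow,
        Derivation.leibniz_pow, PowerSeries.derivative_C, hd1E]
      simp only [smul_eq_mul, nsmul_eq_mul, Nat.add_sub_cancel, mul_zero, zero_mul, smul_zero]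
      ring
    have hcast : ((ℓ+1:ℕ) : PowerSeries ℚ) = PowerSeries.C ((ℓ:ℚ)+1) := by
      rw [show ((ℓ:ℚ)+1) = ((ℓ+1:ℕ) : ℚ) by push_cast; ring, map_natCast]
    have hfac : (Nat.factorial (ℓ+1) : ℚ) = ((ℓ:ℚ)+1) * (Nat.factorial ℓ : ℚ) := by
      rw [Nat.factorial_succ]; push_cast; ring
    rw [hL, hDΦ, ih, hiter, hcast, hfac, map_mul]
    linear_combination (PowerSeries.C (Nat.factorial ℓ : ℚ) * PowerSeries.C ((ℓ:ℚ)+1)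
        * Userie^ℓ * (d⁄dX ℚ Userie)) * X_mul_U
      - (PowerSeries.C (Nat.factorial ℓ : ℚ) * PowerSeries.C ((ℓ:ℚ)+1)
        * Userie^(ℓ+1)) * h2

lemma constCoeff_iter_deriv (k : ℕ) (f : PowerSeries ℚ) :
    PowerSeries.coeff 0 ((d⁄dX ℚ)^[k] f) = (Nat.factorial k : ℚ) * PowerSeries.coeff k f := by
  induction k generalizing f with
  | zero => simp
  | succ k ih =>
    rw [Function.iterate_succ_apply, ih, PowerSeries.coeff_derivative, Nat.factorial_succ]
    push_cast
    ring

lemma rescale_C' (a r : ℚ) : PowerSeries.rescale a (PowerSeries.C r) = PowerSeries.C r := by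
  ext n
  rw [PowerSeries.coeff_rescale]
  cases n with
  | zero => simp
  | succ n => simp [PowerSeries.coeff_C]

/-- `rescale` as an algebra homomorphism. -/
def rescaleAlg (a : ℚ) : PowerSeries ℚ →ₐ[ℚ] PowerSeries ℚ :=
  { PowerSeries.rescale a with
    commutes' := fun r => by
      simp only [RingHom.toMonoidHom_eq_coe, OneHom.toFun_eq_coe, MonoidHom.toOneHom_coe,
        MonoidHom.coe_coe, PowerSeries.algebraMap_apply, Algebra.algebraMap_self_apply]
      exact rescale_C' a r }

lemma rescaleAlg_apply (a : ℚ) (f : PowerSeries ℚ) :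
    rescaleAlg a f = PowerSeries.rescale a f := rfl

lemma constCoeff_aeval (q : Polynomial ℚ) :
    PowerSeries.constantCoeff (Polynomial.aeval E q) = q.eval 1 := by
  rw [Polynomial.aeval_def, Polynomial.hom_eval₂]
  have h1 : (PowerSeries.constantCoeff (R := ℚ)).comp (algebraMap ℚ (PowerSeries ℚ)) = RingHom.id ℚ := by
    ext r
    simp [PowerSeries.algebraMap_apply]
  rw [h1, PowerSeries.constantCoeff_exp]
  rfl

lemma dvd_transfer (p : Polynomial ℚ) (k : ℕ)
    (h : (PowerSeries.X : PowerSeries ℚ)^k ∣ Polynomial.aeval E p) :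
    (Polynomial.X - 1 : Polynomial ℚ)^k ∣ p := by
  by_cases hp : p = 0
  · subst hp; simp
  obtain ⟨q, hq, hndvd⟩ := p.exists_eq_pow_rootMultiplicity_mul_and_not_dvd hp 1
  set r := p.rootMultiplicity 1 with hr
  by_cases hkr : k ≤ r
  · refine dvd_trans (pow_dvd_pow _ hkr) ?_
    rw [hq, map_one]
    exact Dvd.intro _ rfl
  · exfalso
    have haev : Polynomial.aeval E p =
        (PowerSeries.X : PowerSeries ℚ)^r * (Userie^r * Polynomial.aeval E q) := by
      rw [hq, map_mul, map_pow, map_sub, Polynomial.aeval_X, Polynomial.aeval_C,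
        PowerSeries.algebraMap_apply, Algebra.algebraMap_self_apply, map_one]
      rw [show E - 1 = PowerSeries.X * Userie from X_mul_U.symm]
      ring
    have h2 : (PowerSeries.X : PowerSeries ℚ)^r * PowerSeries.X ∣
        (PowerSeries.X : PowerSeries ℚ)^r * (Userie^r * Polynomial.aeval E q) := by
      rw [← pow_succ]
      exact dvd_trans (pow_dvd_pow _ (by omega)) (haev ▸ h)
    obtain ⟨c, hc⟩ := h2
    have h3 : (PowerSeries.X : PowerSeries ℚ) ∣ Userie^r * Polynomial.aeval E q := by
      refine ⟨c, mul_left_cancel₀ (pow_ne_zero r PowerSeries.X_ne_zero) ?_⟩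
      rw [hc]; ring
    rw [PowerSeries.X_dvd_iff, map_mul, map_pow, constCoeff_U, one_pow, one_mul,
      constCoeff_aeval] at h3
    exact hndvd ((Polynomial.dvd_iff_isRoot (a := 1)).mpr h3) |>.elim

lemma Apoly_eval_neg_one (ℓ : ℕ) (hℓ : 1 ≤ ℓ) (hev : Even ℓ) :
    (Apoly ℓ).eval (-1) = 0 := by
  have hdeg : (Apoly ℓ).natDegree < ℓ + 2 := by
    have : (Apoly ℓ).natDegree ≤ ℓ + 1 :=
      Polynomial.natDegree_le_iff_coeff_eq_zero.mpr fun N hN => Apoly_vanish ℓ N (by omega)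
    omega
  rw [Polynomial.eval_eq_sum_range' hdeg]
  set f : ℕ → ℚ := fun i => (Apoly ℓ).coeff i * (-1)^i with hf
  have hrefl : ∑ j ∈ range (ℓ+2), f (ℓ+2-1-j) = ∑ j ∈ range (ℓ+2), f j :=
    Finset.sum_range_reflect f (ℓ+2)
  have hterm : ∀ j ∈ range (ℓ+2), f (ℓ+2-1-j) = -(f j) := by
    intro j hj
    have hjle : j ≤ ℓ + 1 := by have := Finset.mem_range.mp hj; omega
    have hsym : (Apoly ℓ).coeff (ℓ+1-j) = (Apoly ℓ).coeff j := (Apoly_sym ℓ hℓ j hjle).symm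
    have hidx : ℓ+2-1-j = ℓ+1-j := by omega
    rw [hf]
    simp only [hidx]
    rw [hsym]
    have hadd : (-1:ℚ)^(ℓ+1-j) * (-1)^j = (-1)^(ℓ+1) := by
      rw [← pow_add]; congr 1; omega
    have hodd : (-1:ℚ)^(ℓ+1) = -1 := Odd.neg_one_pow hev.add_one
    have h2 : (-1:ℚ)^(ℓ+1-j) * (-1)^j = -1 := by rw [hadd, hodd]
    have hsq : (-1:ℚ)^j * (-1)^j = 1 := by
      rw [← pow_add]; exact Even.neg_one_pow ⟨j, rfl⟩
    have hneg : (-1:ℚ)^(ℓ+1-j) = -(-1)^j := by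
      linear_combination (-1:ℚ)^j * h2 - (-1:ℚ)^(ℓ+1-j) * hsq
    rw [hneg]
    ring
  have hS : ∑ j ∈ range (ℓ+2), f j = -∑ j ∈ range (ℓ+2), f j := by
    conv_lhs => rw [← hrefl]
    rw [Finset.sum_congr rfl hterm, Finset.sum_neg_distrib]
  linarith [hS]

/-- If `ℓ ≥ 2` is even then `A_ℓ(-1) = 0` and the strengthened congruence
`A_ℓ(x^m) ≡ ((1+x+⋯+x^{m-1})/m)^{ℓ+1}·A_ℓ(x) mod (x-1)^{ℓ+2}` holds for all `m ≥ 2`. -/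
theorem eulerian_congruence_even (ℓ : ℕ) (hℓ : 2 ≤ ℓ) (hev : Even ℓ)
    (A : Polynomial ℚ)
    (hA : (A : PowerSeries ℚ) =
      (1 - PowerSeries.X) ^ (ℓ + 1) * PowerSeries.mk (fun n => (n : ℚ) ^ ℓ)) :
    A.eval (-1) = 0 ∧
      ∀ m : ℕ, 2 ≤ m →
        (Polynomial.X - 1) ^ (ℓ + 2) ∣
          A.comp (Polynomial.X ^ m) -
            (Polynomial.C ((m : ℚ))⁻¹ * ∑ i ∈ Finset.range m, Polynomial.X ^ i)
                ^ (ℓ + 1) * A := by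
  have hAeq : A = Apoly ℓ := by
    apply Polynomial.coe_inj.mp
    rw [hA, Apoly_coe]
  subst hAeq
  constructor
  · exact Apoly_eval_neg_one ℓ (by omega) hev
  · intro m hm
    have hm0 : (m : ℚ) ≠ 0 := Nat.cast_ne_zero.mpr (by omega)
    have hem : (E : PowerSeries ℚ)^m = PowerSeries.rescale (m:ℚ) E :=
      PowerSeries.exp_pow_eq_rescale_exp m
    have hΦ := key_aeval ℓ
    have hcomp : Polynomial.aeval E ((Apoly ℓ).comp (Polynomial.X ^ m)) =
        PowerSeries.rescale (m:ℚ) (Polynomial.aeval E (Apoly ℓ)) := by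
      rw [Polynomial.aeval_comp, map_pow, Polynomial.aeval_X, hem]
      rw [show PowerSeries.rescale (m:ℚ) E = rescaleAlg (m:ℚ) E from rfl,
        Polynomial.aeval_algHom_apply, rescaleAlg_apply]
    have hrescΦ : PowerSeries.rescale (m:ℚ) (Polynomial.aeval E (Apoly ℓ)) =
        PowerSeries.C (Nat.factorial ℓ : ℚ)
            * (PowerSeries.rescale (m:ℚ) Userie)^(ℓ+1)
          + (1 - (E : PowerSeries ℚ)^m)^(ℓ+1)
            * (PowerSeries.rescale (m:ℚ) ((d⁄dX ℚ)^[ℓ] Rserie)) := by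
      rw [hΦ]
      simp only [map_add, map_mul, map_pow, map_sub, map_one, rescale_C']
      rw [← hem]
    have hSA : Polynomial.aeval E
          ((Polynomial.C ((m : ℚ))⁻¹ * ∑ i ∈ Finset.range m, Polynomial.X ^ i) ^ (ℓ + 1)
            * Apoly ℓ) =
        (PowerSeries.C ((m:ℚ)⁻¹) * ∑ i ∈ Finset.range m, (E : PowerSeries ℚ)^i)^(ℓ+1)
          * Polynomial.aeval E (Apoly ℓ) := by
      simp only [map_mul, map_pow, map_sum, Polynomial.aeval_X, Polynomial.aeval_C,
        PowerSeries.algebraMap_apply, Algebra.algebraMap_self_apply]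
    have k1 : (∑ i ∈ Finset.range m, (E : PowerSeries ℚ)^i) * (E - 1)
        = (E : PowerSeries ℚ)^m - 1 := geom_sum_mul E m
    have k2 : (E : PowerSeries ℚ)^m - 1 = PowerSeries.C (m:ℚ)
        * (PowerSeries.X * PowerSeries.rescale (m:ℚ) Userie) := by
      rw [hem]
      calc PowerSeries.rescale (m:ℚ) E - 1
          = PowerSeries.rescale (m:ℚ) (E - 1) := by rw [map_sub, map_one]
        _ = PowerSeries.rescale (m:ℚ) (PowerSeries.X * Userie) := by rw [X_mul_U]
        _ = PowerSeries.C (m:ℚ) * (PowerSeries.X * PowerSeries.rescale (m:ℚ) Userie) := by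
            rw [map_mul, PowerSeries.rescale_X]; ring
    have k4 : PowerSeries.C ((m:ℚ)⁻¹) * PowerSeries.C (m:ℚ) = 1 := by
      rw [← map_mul, inv_mul_cancel₀ hm0, map_one]
    have k3 : (∑ i ∈ Finset.range m, (E : PowerSeries ℚ)^i) * Userie
        = PowerSeries.C (m:ℚ) * PowerSeries.rescale (m:ℚ) Userie := by
      apply mul_left_cancel₀ (PowerSeries.X_ne_zero (R := ℚ))
      linear_combination (∑ i ∈ Finset.range m, (E : PowerSeries ℚ)^i) * X_mul_U + k1 + k2
    have k5 : (PowerSeries.C ((m:ℚ)⁻¹) * ∑ i ∈ Finset.range m, (E : PowerSeries ℚ)^i)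
        * Userie = PowerSeries.rescale (m:ℚ) Userie := by
      linear_combination PowerSeries.C ((m:ℚ)⁻¹) * k3
        + (PowerSeries.rescale (m:ℚ) Userie) * k4
    have k6 : (PowerSeries.C ((m:ℚ)⁻¹) * ∑ i ∈ Finset.range m, (E : PowerSeries ℚ)^i)
        * (1 - E) = -(PowerSeries.X * PowerSeries.rescale (m:ℚ) Userie) := by
      linear_combination (-(PowerSeries.C ((m:ℚ)⁻¹))) * k1
        - PowerSeries.C ((m:ℚ)⁻¹) * k2
        - (PowerSeries.X * PowerSeries.rescale (m:ℚ) Userie) * k4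
    have p5 : (PowerSeries.C ((m:ℚ)⁻¹) * ∑ i ∈ Finset.range m, (E : PowerSeries ℚ)^i)^(ℓ+1)
        * Userie^(ℓ+1) = (PowerSeries.rescale (m:ℚ) Userie)^(ℓ+1) := by
      rw [← mul_pow, k5]
    have p6 : (PowerSeries.C ((m:ℚ)⁻¹) * ∑ i ∈ Finset.range m, (E : PowerSeries ℚ)^i)^(ℓ+1)
        * (1 - E)^(ℓ+1)
        = (-(PowerSeries.X * PowerSeries.rescale (m:ℚ) Userie))^(ℓ+1) := by
      rw [← mul_pow, k6]
    have p7 : (1 - (E : PowerSeries ℚ)^m)^(ℓ+1)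
        = (-(PowerSeries.C (m:ℚ) * (PowerSeries.X * PowerSeries.rescale (m:ℚ) Userie)))^(ℓ+1) := by
      rw [show (1 - (E : PowerSeries ℚ)^m)
        = -(PowerSeries.C (m:ℚ) * (PowerSeries.X * PowerSeries.rescale (m:ℚ) Userie))
        from by linear_combination -k2]
    have hmain : Polynomial.aeval E ((Apoly ℓ).comp (Polynomial.X ^ m) -
          (Polynomial.C ((m : ℚ))⁻¹ * ∑ i ∈ Finset.range m, Polynomial.X ^ i) ^ (ℓ + 1)
            * Apoly ℓ) =
        (-PowerSeries.X)^(ℓ+1) * (PowerSeries.rescale (m:ℚ) Userie)^(ℓ+1)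
          * ((PowerSeries.C (m:ℚ))^(ℓ+1)
              * PowerSeries.rescale (m:ℚ) ((d⁄dX ℚ)^[ℓ] Rserie)
            - (d⁄dX ℚ)^[ℓ] Rserie) := by
      rw [map_sub, hcomp, hrescΦ, hSA, hΦ]
      linear_combination (-(PowerSeries.C (Nat.factorial ℓ : ℚ))) * p5
        + (PowerSeries.rescale (m:ℚ) ((d⁄dX ℚ)^[ℓ] Rserie)) * p7
        - ((d⁄dX ℚ)^[ℓ] Rserie) * p6
    have hccG : PowerSeries.constantCoeff ((d⁄dX ℚ)^[ℓ] Rserie) = 0 := by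
      rw [← PowerSeries.coeff_zero_eq_constantCoeff_apply, constCoeff_iter_deriv]
      have : _root_.bernoulli (ℓ+1) = 0 := by
        rw [_root_.bernoulli, bernoulli'_eq_zero_of_odd hev.add_one (by omega)]
        ring
      simp [Rserie, this]
    have hccdiff : PowerSeries.constantCoeff
        ((PowerSeries.C (m:ℚ))^(ℓ+1)
            * PowerSeries.rescale (m:ℚ) ((d⁄dX ℚ)^[ℓ] Rserie)
          - (d⁄dX ℚ)^[ℓ] Rserie) = 0 := by
      rw [map_sub, map_mul, hccG]
      have : PowerSeries.constantCoeff
          (PowerSeries.rescale (m:ℚ) ((d⁄dX ℚ)^[ℓ] Rserie)) = 0 := by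
        rw [← PowerSeries.coeff_zero_eq_constantCoeff_apply, PowerSeries.coeff_rescale,
          pow_zero, one_mul, PowerSeries.coeff_zero_eq_constantCoeff_apply, hccG]
      rw [this]
      ring
    obtain ⟨w, hw⟩ := PowerSeries.X_dvd_iff.mpr hccdiff
    apply dvd_transfer _ (ℓ+2)
    exact ⟨(-1)^(ℓ+1) * (PowerSeries.rescale (m:ℚ) Userie)^(ℓ+1) * w,
      by rw [hmain, hw]; ring⟩
end
end

section
/- Let f(x) ∈ ℂ[x] be monic of degree ℓ > 0. If there exists an integer m ≥ 2 such that f(x^m) ≡ ((1 + x + ⋯ + x^{m-1})/m)^{ℓ+1} · f(x) mod (1-x)^{ℓ+1}, then f(x) = A_ℓ(x), the Eulerian polynomial. -/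
open PowerSeries Polynomial Finset
open scoped fwdDiff

private lemma fwdDiff_iter_zero_fun (n : ℕ) :
    (fwdDiff (1:ℂ))^[n] (fun _ : ℂ => (0:ℂ)) = fun _ => 0 := by
  funext y
  rw [fwdDiff_iter_eq_sum_shift]
  simp

private lemma fwdDiff_iter_poly (n : ℕ) (p : Polynomial ℂ) (hp : p.natDegree < n) :
    (fwdDiff (1:ℂ))^[n] (fun y : ℂ => p.eval y) = fun _ => 0 := by
  induction n generalizing p with
  | zero => omega
  | succ n IH =>
    rw [Function.iterate_succ_apply]
    have hq : ((fwdDiff (1:ℂ)) fun y : ℂ => p.eval y) = fun y : ℂ => (taylor 1 p - p).eval y := by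
      funext y
      simp [fwdDiff, taylor_eval]
    rw [hq]
    rcases eq_or_ne (taylor (1:ℂ) p - p) 0 with h0 | h0
    · rw [h0]
      simpa using fwdDiff_iter_zero_fun n
    · apply IH
      have hp0 : p ≠ 0 := by
        rintro rfl; simp at h0
      have hd0 : p.natDegree ≠ 0 := by
        intro hd
        obtain ⟨a, rfl⟩ := natDegree_eq_zero.mp hd
        simp [taylor_C] at h0
      have hlc : (taylor (1:ℂ) p).leadingCoeff = p.leadingCoeff := by
        rw [taylor_apply, leadingCoeff_comp (by rw [natDegree_X_add_C]; exact one_ne_zero),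
          (monic_X_add_C _).leadingCoeff, one_pow, mul_one]
      have htne : taylor (1:ℂ) p ≠ 0 := by
        intro hz
        exact hp0 (taylor_injective 1 (by simpa using hz))
      have hdeg : (taylor (1:ℂ) p).degree = p.degree := by
        rw [degree_eq_natDegree htne, degree_eq_natDegree hp0, natDegree_taylor]
      have hlt := degree_sub_lt hdeg htne hlc
      rw [hdeg] at hlt
      have hlt2 := natDegree_lt_natDegree h0 hlt
      omega

private lemma alt_sum_eval (d : ℕ) (p : Polynomial ℂ) (hp : p.natDegree < d) (x : ℂ) :
    ∑ i ∈ range (d + 1), (-1:ℂ)^i * (d.choose i : ℂ) * p.eval (x - i) = 0 := by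
  have h0 := congrFun (fwdDiff_iter_poly d p hp) (x - d)
  rw [fwdDiff_iter_eq_sum_shift] at h0
  have h1 := Finset.sum_range_reflect
    (fun k => ((-1 : ℤ) ^ (d - k) * d.choose k) • p.eval (x - d + k • (1:ℂ))) (d+1)
  rw [h0] at h1
  rw [← h1]
  refine Finset.sum_congr rfl fun j hj => ?_
  have hjd : j ≤ d := by simpa [Nat.lt_succ_iff] using hj
  have e1 : d + 1 - 1 - j = d - j := by omega
  have e2 : d - (d - j) = j := by omega
  rw [e1, e2, Nat.choose_symm hjd]
  have e3 : x - (d:ℂ) + (d - j) • (1:ℂ) = x - j := by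
    rw [nsmul_eq_mul, mul_one, Nat.cast_sub hjd]
    ring
  rw [e3, zsmul_eq_mul]
  push_cast
  ring

private lemma coeff_one_sub_X_pow (N i : ℕ) :
    ((1 - Polynomial.X : Polynomial ℂ) ^ N).coeff i = (-1:ℂ)^i * (N.choose i : ℂ) := by
  have h : (1 - Polynomial.X : Polynomial ℂ) = (-Polynomial.X) + 1 := by ring
  rw [h, add_pow, finset_sum_coeff]
  have hterm : ∀ k ∈ range (N+1),
      ((-Polynomial.X : Polynomial ℂ)^k * 1^(N-k) * (N.choose k : Polynomial ℂ)).coeff i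
        = if k = i then (-1:ℂ)^i * (N.choose i : ℂ) else 0 := by
    intro k _
    rw [one_pow, mul_one, neg_pow]
    rw [show ((-1 : Polynomial ℂ)^k * Polynomial.X^k * (N.choose k : Polynomial ℂ))
        = Polynomial.C ((-1:ℂ)^k * (N.choose k : ℂ)) * Polynomial.X ^ k by
      simp only [map_mul, map_pow, map_neg, map_one, Polynomial.C_eq_natCast]
      ring]
    rw [Polynomial.coeff_C_mul, Polynomial.coeff_X_pow]
    by_cases hk : k = i
    · simp [hk]
    · rw [if_neg (fun h => hk h.symm), if_neg hk, mul_zero]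
  rw [Finset.sum_congr rfl hterm, Finset.sum_ite_eq' (range (N+1)) i]
  by_cases hi : i ∈ range (N+1)
  · simp [hi]
  · have : N.choose i = 0 := by
      rw [Finset.mem_range] at hi
      exact Nat.choose_eq_zero_of_lt (by omega)
    simp [hi, this]

-- coercion of (1 - X)^(ℓ+1)
private lemma coe_one_sub_X_pow (N : ℕ) :
    ((1 : PowerSeries ℂ) - PowerSeries.X) ^ N
      = (((1 - Polynomial.X : Polynomial ℂ) ^ N : Polynomial ℂ) : PowerSeries ℂ) := by
  rw [Polynomial.coe_pow, Polynomial.coe_sub, Polynomial.coe_one, Polynomial.coe_X]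

private lemma coeff_A' (ℓ : ℕ) (A : Polynomial ℂ)
    (hA : (A : PowerSeries ℂ) =
      (1 - PowerSeries.X) ^ (ℓ + 1) * PowerSeries.mk (fun n => (n : ℂ) ^ ℓ)) (k : ℕ) :
    A.coeff k = ∑ i ∈ range (k+1),
      ((1 - Polynomial.X : Polynomial ℂ) ^ (ℓ+1)).coeff i * ((k - i : ℕ) : ℂ)^ℓ := by
  have h := congrArg (PowerSeries.coeff k) hA
  rw [Polynomial.coeff_coe, PowerSeries.coeff_mul,
    Finset.Nat.sum_antidiagonal_eq_sum_range_succ_mk] at h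
  rw [h]
  refine Finset.sum_congr rfl fun i _ => ?_
  rw [coe_one_sub_X_pow, Polynomial.coeff_coe, PowerSeries.coeff_mk]

private lemma coeff_A (ℓ : ℕ) (A : Polynomial ℂ)
    (hA : (A : PowerSeries ℂ) =
      (1 - PowerSeries.X) ^ (ℓ + 1) * PowerSeries.mk (fun n => (n : ℂ) ^ ℓ)) (k : ℕ) :
    A.coeff k = ∑ i ∈ range (k+1), (-1:ℂ)^i * ((ℓ+1).choose i : ℂ) * ((k - i : ℕ) : ℂ)^ℓ := by
  rw [coeff_A' ℓ A hA k]
  exact Finset.sum_congr rfl fun i _ => by rw [coeff_one_sub_X_pow]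

private lemma coeff_A_high (ℓ : ℕ) (A : Polynomial ℂ)
    (hA : (A : PowerSeries ℂ) =
      (1 - PowerSeries.X) ^ (ℓ + 1) * PowerSeries.mk (fun n => (n : ℂ) ^ ℓ)) (k : ℕ)
    (hk : ℓ < k) : A.coeff k = 0 := by
  rw [coeff_A ℓ A hA k]
  have hsub : range (ℓ+2) ⊆ range (k+1) := by
    intro x hx
    rw [Finset.mem_range] at *
    omega
  rw [← Finset.sum_subset hsub (fun x _ hx => by
    rw [Finset.mem_range] at hx
    have : (ℓ+1).choose x = 0 := Nat.choose_eq_zero_of_lt (by omega)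
    simp [this])]
  have h0 := alt_sum_eval (ℓ+1) (Polynomial.X ^ ℓ) (by simp) (k : ℂ)
  rw [← h0]
  refine Finset.sum_congr rfl fun i hi => ?_
  rw [Finset.mem_range] at hi
  have : ((k - i : ℕ) : ℂ) = (k : ℂ) - i := by
    rw [Nat.cast_sub (by omega)]
  rw [this]
  simp

private lemma coeff_A_top (ℓ : ℕ) (A : Polynomial ℂ)
    (hA : (A : PowerSeries ℂ) =
      (1 - PowerSeries.X) ^ (ℓ + 1) * PowerSeries.mk (fun n => (n : ℂ) ^ ℓ)) :
    A.coeff ℓ = 1 := by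
  have h0 := alt_sum_eval (ℓ+1) (Polynomial.X ^ ℓ) (by simp) (ℓ : ℂ)
  rw [Finset.sum_range_succ] at h0
  have hlast : (-1:ℂ)^(ℓ+1) * ((ℓ+1).choose (ℓ+1) : ℂ) *
      Polynomial.eval ((ℓ:ℂ) - (ℓ+1 : ℕ)) (Polynomial.X ^ ℓ) = -1 := by
    rw [Nat.choose_self]
    push_cast
    rw [show (ℓ:ℂ) - (ℓ + 1) = -1 by ring]
    simp [← pow_succ', pow_succ]
    ring_nf
    simp [pow_succ]
  rw [coeff_A ℓ A hA ℓ]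
  have hsum : ∑ i ∈ range (ℓ+1), (-1:ℂ)^i * ((ℓ+1).choose i : ℂ) * ((ℓ - i : ℕ) : ℂ)^ℓ
      = ∑ i ∈ range (ℓ+1), (-1:ℂ)^i * ((ℓ+1).choose i : ℂ) *
          Polynomial.eval ((ℓ:ℂ) - i) (Polynomial.X ^ ℓ) := by
    refine Finset.sum_congr rfl fun i hi => ?_
    rw [Finset.mem_range] at hi
    rw [Nat.cast_sub (by omega)]
    simp
  rw [hsum]
  have := h0
  -- h0 : sum + last = 0, so sum = -last = 1
  have h1 : ∑ i ∈ range (ℓ+1), (-1:ℂ)^i * ((ℓ+1).choose i : ℂ) *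
      Polynomial.eval ((ℓ:ℂ) - i) (Polynomial.X ^ ℓ) = 1 := by
    rw [hlast] at h0
    linear_combination h0
  rw [h1]

private lemma coeff_sA (ℓ m : ℕ) (hm : 0 < m) (A : Polynomial ℂ)
    (hA : (A : PowerSeries ℂ) =
      (1 - PowerSeries.X) ^ (ℓ + 1) * PowerSeries.mk (fun n => (n : ℂ) ^ ℓ)) (k : ℕ) :
    ((∑ i ∈ range m, Polynomial.X ^ i)^(ℓ+1) * A).coeff (m * k)
      = (m:ℂ)^ℓ * A.coeff k := by
  have hgeom : ((1 - Polynomial.X) * (∑ i ∈ range m, Polynomial.X ^ i) : Polynomial ℂ)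
      = 1 - Polynomial.X ^ m := mul_neg_geom_sum _ _
  have hser : (((∑ i ∈ range m, Polynomial.X ^ i)^(ℓ+1) * A : Polynomial ℂ) : PowerSeries ℂ)
      = ((Polynomial.expand ℂ m ((1 - Polynomial.X)^(ℓ+1)) : Polynomial ℂ) : PowerSeries ℂ)
        * PowerSeries.mk (fun n => (n : ℂ) ^ ℓ) := by
    have hexp : (Polynomial.expand ℂ m ((1 - Polynomial.X : Polynomial ℂ)^(ℓ+1)))
        = (1 - Polynomial.X ^ m)^(ℓ+1) := by
      rw [map_pow, map_sub, map_one, Polynomial.expand_X]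
    rw [hexp, Polynomial.coe_mul, hA, coe_one_sub_X_pow, ← mul_assoc, ← Polynomial.coe_mul,
      show (∑ i ∈ range m, Polynomial.X ^ i : Polynomial ℂ)^(ℓ+1) * (1 - Polynomial.X)^(ℓ+1)
        = (1 - Polynomial.X^m)^(ℓ+1) by rw [← mul_pow, mul_comm, hgeom]]
  have h := congrArg (PowerSeries.coeff (m*k)) hser
  rw [Polynomial.coeff_coe, PowerSeries.coeff_mul,
    Finset.Nat.sum_antidiagonal_eq_sum_range_succ_mk] at h
  rw [h]
  have hterm : ∀ i ∈ range (m*k+1),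
      (PowerSeries.coeff i) ((Polynomial.expand ℂ m
          ((1 - Polynomial.X : Polynomial ℂ)^(ℓ+1)) : Polynomial ℂ) : PowerSeries ℂ)
        * (PowerSeries.coeff (m*k - i)) (PowerSeries.mk (fun n => (n : ℂ) ^ ℓ))
      = if m ∣ i then ((1 - Polynomial.X : Polynomial ℂ)^(ℓ+1)).coeff (i/m)
          * ((m*k - i : ℕ) : ℂ)^ℓ else 0 := by
    intro i _
    rw [Polynomial.coeff_coe, Polynomial.coeff_expand hm, PowerSeries.coeff_mk,
      ite_mul, zero_mul]
  rw [Finset.sum_congr rfl hterm]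
  have himg : (range (k+1)).image (fun j => m * j) ⊆ range (m*k+1) := by
    intro x hx
    simp only [Finset.mem_image, Finset.mem_range] at hx ⊢
    obtain ⟨j, hj, rfl⟩ := hx
    have : m * j ≤ m * k := Nat.mul_le_mul_left m (by omega)
    omega
  rw [← Finset.sum_subset himg (fun x hx hnx => ?_)]
  · rw [Finset.sum_image (fun a _ b _ hab => Nat.eq_of_mul_eq_mul_left hm hab)]
    have hterm2 : ∀ j ∈ range (k+1),
        (if m ∣ m*j then ((1 - Polynomial.X : Polynomial ℂ)^(ℓ+1)).coeff ((m*j)/m)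
          * ((m*k - m*j : ℕ) : ℂ)^ℓ else 0)
        = (m:ℂ)^ℓ * (((1 - Polynomial.X : Polynomial ℂ)^(ℓ+1)).coeff j
            * ((k - j : ℕ) : ℂ)^ℓ) := by
      intro j hj
      rw [Finset.mem_range] at hj
      rw [if_pos (dvd_mul_right m j), Nat.mul_div_cancel_left j hm]
      have hjk : j ≤ k := by omega
      have hc : ((m*k - m*j : ℕ) : ℂ) = (m:ℂ) * ((k - j : ℕ) : ℂ) := by
        rw [Nat.cast_sub (Nat.mul_le_mul_left m hjk), Nat.cast_sub hjk]
        push_cast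
        ring
      rw [hc, mul_pow]
      ring
    rw [Finset.sum_congr rfl hterm2, ← Finset.mul_sum, ← coeff_A' ℓ A hA k]
  · simp only [Finset.mem_range] at hx
    by_cases hdvd : m ∣ x
    · exfalso
      obtain ⟨j, rfl⟩ := hdvd
      apply hnx
      simp only [Finset.mem_image, Finset.mem_range]
      refine ⟨j, ?_, rfl⟩
      by_contra hjk
      have h1 : m * (k+1) ≤ m * j := Nat.mul_le_mul_left m (by omega)
      have h2 : m * (k+1) = m*k + m := by ring
      omega
    · rw [if_neg hdvd]

private lemma scale_coeff (c : ℂ) (p : Polynomial ℂ) (n : ℕ) :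
    (p.comp (Polynomial.C c * Polynomial.X)).coeff n = c ^ n * p.coeff n := by
  induction p using Polynomial.induction_on' with
  | add p q hp hq => simp [add_comp, hp, hq, mul_add]
  | monomial k a =>
    rw [monomial_comp, mul_pow, ← map_pow, ← mul_assoc, ← map_mul]
    rw [Polynomial.coeff_C_mul, Polynomial.coeff_X_pow, Polynomial.coeff_monomial]
    by_cases hk : n = k
    · subst hk; simp [mul_comm]
    · rw [if_neg hk, if_neg (fun h : k = n => (hk h.symm).elim), mul_zero, mul_zero]

private lemma expand_A_eq (ℓ m : ℕ) (hm : 0 < m) (μ : ℂ) (hμ : IsPrimitiveRoot μ m)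
    (A : Polynomial ℂ)
    (hA : (A : PowerSeries ℂ) =
      (1 - PowerSeries.X) ^ (ℓ + 1) * PowerSeries.mk (fun n => (n : ℂ) ^ ℓ)) :
    Polynomial.C ((m:ℂ)^(ℓ+1)) * (A.comp (Polynomial.X ^ m))
      = ∑ j ∈ range m, ((∑ i ∈ range m, Polynomial.X ^ i)^(ℓ+1) * A).comp
          (Polynomial.C (μ^j) * Polynomial.X) := by
  ext n
  rw [Polynomial.coeff_C_mul, finset_sum_coeff]
  have hRHS : ∀ j ∈ range m,
      ((((∑ i ∈ range m, Polynomial.X ^ i)^(ℓ+1) * A).comp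
          (Polynomial.C (μ^j) * Polynomial.X))).coeff n
      = ((μ^n)^j) * ((∑ i ∈ range m, Polynomial.X ^ i)^(ℓ+1) * A).coeff n := by
    intro j _
    rw [scale_coeff, ← pow_mul, mul_comm j n, pow_mul]
  rw [Finset.sum_congr rfl hRHS, ← Finset.sum_mul]
  rw [← Polynomial.expand_eq_comp_X_pow, Polynomial.coeff_expand hm]
  by_cases hdvd : m ∣ n
  · obtain ⟨k, rfl⟩ := hdvd
    have hμ1 : μ ^ (m * k) = 1 := by
      rw [pow_mul, hμ.pow_eq_one, one_pow]
    rw [if_pos (dvd_mul_right m k), Nat.mul_div_cancel_left k hm, hμ1]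
    simp only [one_pow]
    rw [Finset.sum_const, Finset.card_range, coeff_sA ℓ m hm A hA k, nsmul_eq_mul]
    rw [pow_succ]
    ring
  · rw [if_neg hdvd, mul_zero]
    have hne : μ ^ n ≠ 1 := fun h => hdvd ((hμ.pow_eq_one_iff_dvd n).mp h)
    rw [geom_sum_eq hne]
    rw [← pow_mul, mul_comm n m, pow_mul, hμ.pow_eq_one, one_pow, sub_self, zero_div,
      zero_mul]

private lemma one_sub_X_dvd_of_root (p : Polynomial ℂ) (h : p.eval 1 = 0) :
    (1 - Polynomial.X) ∣ p := by
  have h1 : (Polynomial.X - Polynomial.C 1) ∣ p := Polynomial.dvd_iff_isRoot.mpr h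
  have h2 : (1 - Polynomial.X : Polynomial ℂ) = -(Polynomial.X - Polynomial.C 1) := by
    rw [Polynomial.C_1]; ring
  rw [h2, neg_dvd]
  exact h1

private lemma A_congruence (ℓ m : ℕ) (hm : 2 ≤ m) (A : Polynomial ℂ)
    (hA : (A : PowerSeries ℂ) =
      (1 - PowerSeries.X) ^ (ℓ + 1) * PowerSeries.mk (fun n => (n : ℂ) ^ ℓ)) :
    (1 - Polynomial.X)^(ℓ+1) ∣ A.comp (Polynomial.X^m)
      - (Polynomial.C ((m : ℂ))⁻¹ * ∑ i ∈ Finset.range m, Polynomial.X ^ i)^(ℓ+1) * A := by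
  have hm0 : 0 < m := by omega
  set μ : ℂ := Complex.exp (2 * Real.pi * Complex.I / m) with hμdef
  have hμ : IsPrimitiveRoot μ m := Complex.isPrimitiveRoot_exp m (by omega)
  have hb := expand_A_eq ℓ m hm0 μ hμ A hA
  rw [Finset.sum_range_eq_add_Ico _ hm0] at hb
  simp only [pow_zero, Polynomial.C_1, one_mul, Polynomial.comp_X] at hb
  -- hb : C(m^(ℓ+1)) * A.comp(X^m) = s^(ℓ+1)*A + ∑_{j∈Ico 1 m} scale term
  have hdvdP : (1 - Polynomial.X : Polynomial ℂ)^(ℓ+1) ∣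
      Polynomial.C ((m:ℂ)^(ℓ+1)) * (A.comp (Polynomial.X ^ m))
        - (∑ i ∈ range m, Polynomial.X ^ i)^(ℓ+1) * A := by
    rw [hb, add_sub_cancel_left]
    refine Finset.dvd_sum fun j hj => ?_
    rw [Finset.mem_Ico] at hj
    rw [Polynomial.mul_comp, Polynomial.pow_comp]
    have hc1 : μ ^ j ≠ 1 := by
      intro h
      have := (hμ.pow_eq_one_iff_dvd j).mp h
      rcases this with ⟨t, ht⟩
      rcases Nat.eq_zero_or_pos t with rfl | htp
      · omega
      · have : m ≤ j := le_trans (Nat.le_mul_of_pos_right m htp) ht.ge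
        omega
    have hev : ((∑ i ∈ range m, Polynomial.X ^ i).comp
        (Polynomial.C (μ^j) * Polynomial.X)).eval 1 = 0 := by
      rw [Polynomial.eval_comp]
      simp only [Polynomial.eval_mul, Polynomial.eval_C, Polynomial.eval_X, mul_one]
      rw [Polynomial.eval_finset_sum]
      simp only [Polynomial.eval_pow, Polynomial.eval_X]
      rw [geom_sum_eq hc1, ← pow_mul, mul_comm j m, pow_mul, hμ.pow_eq_one, one_pow,
        sub_self, zero_div]
    exact Dvd.dvd.mul_right
      (pow_dvd_pow_of_dvd (one_sub_X_dvd_of_root _ hev) (ℓ+1)) _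
  have hmC : (m : ℂ) ≠ 0 := Nat.cast_ne_zero.mpr (by omega)
  have hunit : (Polynomial.C ((m:ℂ)⁻¹))^(ℓ+1) * Polynomial.C ((m:ℂ)^(ℓ+1)) = 1 := by
    rw [← map_pow, ← map_mul, ← mul_pow, inv_mul_cancel₀ hmC, one_pow, map_one]
  have hrepr : A.comp (Polynomial.X^m)
      - (Polynomial.C ((m : ℂ))⁻¹ * ∑ i ∈ Finset.range m, Polynomial.X ^ i)^(ℓ+1) * A
      = (Polynomial.C ((m:ℂ)⁻¹))^(ℓ+1) *
        (Polynomial.C ((m:ℂ)^(ℓ+1)) * (A.comp (Polynomial.X ^ m))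
          - (∑ i ∈ range m, Polynomial.X ^ i)^(ℓ+1) * A) := by
    rw [mul_sub, ← mul_assoc, hunit, one_mul, ← mul_assoc, ← mul_pow]
  rw [hrepr]
  exact Dvd.dvd.mul_left hdvdP _

private lemma key_zero (ℓ m : ℕ) (hm : 2 ≤ m) (p : Polynomial ℂ)
    (hdeg : p.natDegree ≤ ℓ)
    (hdvd : (1 - Polynomial.X)^(ℓ+1) ∣ p.comp (Polynomial.X^m)
      - (Polynomial.C ((m : ℂ))⁻¹ * ∑ i ∈ Finset.range m, Polynomial.X ^ i)^(ℓ+1) * p)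
    (h1 : p.eval 1 = 0) : p = 0 := by
  have hm0 : 0 < m := by omega
  have hmC : (m : ℂ) ≠ 0 := Nat.cast_ne_zero.mpr (by omega)
  have h1X : (1 - Polynomial.X : Polynomial ℂ) ≠ 0 := by
    intro h
    have hX1 : (Polynomial.X : Polynomial ℂ) = Polynomial.C 1 := by
      rw [Polynomial.C_1]
      linear_combination -h
    exact Polynomial.X_ne_C 1 hX1
  have hgeom : ((1 - Polynomial.X) * (∑ i ∈ range m, Polynomial.X ^ i) : Polynomial ℂ)
      = 1 - Polynomial.X ^ m := mul_neg_geom_sum _ _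
  have claim : ∀ k, k ≤ ℓ + 1 → (1 - Polynomial.X)^k ∣ p := by
    intro k
    induction k with
    | zero => intro _; simp
    | succ k IH =>
      intro hk
      obtain ⟨g, hg⟩ := IH (by omega)
      have hgood : g.eval 1 = 0 := by
        rcases Nat.eq_zero_or_pos k with rfl | hkpos
        · rw [hg] at h1
          simpa using h1
        · -- use the divisibility
          have hcomp : p.comp (Polynomial.X ^ m)
              = (1 - Polynomial.X)^k * ((∑ i ∈ range m, Polynomial.X ^ i)^k
                  * g.comp (Polynomial.X ^ m)) := by
            rw [hg, Polynomial.mul_comp, Polynomial.pow_comp, Polynomial.sub_comp,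
              Polynomial.one_comp, Polynomial.X_comp]
            rw [show ((1 : Polynomial ℂ) - Polynomial.X ^ m) = (1 - Polynomial.X)
                * (∑ i ∈ range m, Polynomial.X ^ i) from hgeom.symm]
            rw [mul_pow, mul_assoc]
          have hQp : (Polynomial.C ((m : ℂ))⁻¹ * ∑ i ∈ Finset.range m, Polynomial.X ^ i)^(ℓ+1) * p
              = (1 - Polynomial.X)^k *
                ((Polynomial.C ((m : ℂ))⁻¹ * ∑ i ∈ Finset.range m, Polynomial.X ^ i)^(ℓ+1) * g) := by
            rw [hg]; ring
          have hsplit : (1 - Polynomial.X : Polynomial ℂ)^(ℓ+1)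
              = (1 - Polynomial.X)^k * (1 - Polynomial.X)^(ℓ+1-k) := by
            rw [← pow_add]
            congr 1
            omega
          rw [hcomp, hQp, hsplit, ← mul_sub] at hdvd
          have hd2 := (mul_dvd_mul_iff_left (pow_ne_zero k h1X)).mp hdvd
          have hd3 : (1 - Polynomial.X : Polynomial ℂ) ∣
              ((∑ i ∈ range m, Polynomial.X ^ i)^k * g.comp (Polynomial.X ^ m)
                - (Polynomial.C ((m : ℂ))⁻¹ * ∑ i ∈ Finset.range m, Polynomial.X ^ i)^(ℓ+1) * g) :=
            dvd_trans (dvd_pow_self _ (by omega : ℓ+1-k ≠ 0)) hd2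
          obtain ⟨w, hw⟩ := hd3
          have hev := congrArg (Polynomial.eval 1) hw
          have hsum1 : (∑ i ∈ range m, Polynomial.X ^ i : Polynomial ℂ).eval 1 = (m : ℂ) := by
            rw [Polynomial.eval_finset_sum]
            simp
          rw [Polynomial.eval_sub, Polynomial.eval_mul, Polynomial.eval_mul,
            Polynomial.eval_pow, Polynomial.eval_pow, Polynomial.eval_comp,
            Polynomial.eval_mul, Polynomial.eval_C, hsum1] at hev
          simp only [Polynomial.eval_pow, Polynomial.eval_X, one_pow, Polynomial.eval_mul,
            Polynomial.eval_sub, Polynomial.eval_one, sub_self, zero_mul] at hev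
          rw [inv_mul_cancel₀ hmC, one_pow, one_mul] at hev
          -- hev : m^k * g.eval 1 - g.eval 1 = 0
          have hmk : ((m : ℂ))^k ≠ 1 := by
            intro hh
            have : ((m^k : ℕ) : ℂ) = ((1 : ℕ) : ℂ) := by
              push_cast
              simpa using hh
            have := Nat.cast_injective this
            have : m^k = 1 := this
            have hge : 2^k ≤ m^k := Nat.pow_le_pow_left (by omega) k
            have h2k : 2^1 ≤ 2^k := Nat.pow_le_pow_right (by omega) (by omega)
            omega
          have : ((m:ℂ)^k - 1) * g.eval 1 = 0 := by linear_combination hev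
          rcases mul_eq_zero.mp this with hc | hc
          · exact absurd (by linear_combination hc) hmk
          · exact hc
      have : (1 - Polynomial.X) ∣ g := one_sub_X_dvd_of_root g hgood
      obtain ⟨g', hg'⟩ := this
      refine ⟨g', ?_⟩
      rw [hg, hg', pow_succ]
      ring
  have hfinal := claim (ℓ+1) le_rfl
  by_contra hp0
  have hle := Polynomial.natDegree_le_of_dvd hfinal hp0
  rw [Polynomial.natDegree_pow] at hle
  have hnd : (1 - Polynomial.X : Polynomial ℂ).natDegree = 1 := by
    rw [show (1 - Polynomial.X : Polynomial ℂ) = -(Polynomial.X - Polynomial.C 1) by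
      rw [Polynomial.C_1]; ring, Polynomial.natDegree_neg, Polynomial.natDegree_X_sub_C]
  rw [hnd, mul_one] at hle
  omega

/-- Characterization of the Eulerian polynomial: if `f ∈ ℂ[x]` is monic of degree
`ℓ > 0` and satisfies `f(x^m) ≡ ((1+x+⋯+x^{m-1})/m)^{ℓ+1}·f(x) mod (1-x)^{ℓ+1}`
for some `m ≥ 2`, then `f = A_ℓ`, the Eulerian polynomial. -/
theorem eulerian_characterization (ℓ : ℕ) (hℓ : 0 < ℓ) (f : Polynomial ℂ)
    (hmonic : f.Monic) (hdeg : f.natDegree = ℓ)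
    (h : ∃ m : ℕ, 2 ≤ m ∧
      (1 - Polynomial.X) ^ (ℓ + 1) ∣
        f.comp (Polynomial.X ^ m) -
          (Polynomial.C ((m : ℂ))⁻¹ * ∑ i ∈ Finset.range m, Polynomial.X ^ i)
              ^ (ℓ + 1) * f)
    (A : Polynomial ℂ)
    (hA : (A : PowerSeries ℂ) =
      (1 - PowerSeries.X) ^ (ℓ + 1) * PowerSeries.mk (fun n => (n : ℂ) ^ ℓ)) :
    f = A := by
  obtain ⟨m, hm2, hdvd_f⟩ := h
  have hAdeg : A.natDegree ≤ ℓ :=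
    Polynomial.natDegree_le_iff_coeff_eq_zero.mpr fun N hN => coeff_A_high ℓ A hA N hN
  have hAtop := coeff_A_top ℓ A hA
  have hAcong := A_congruence ℓ m hm2 A hA
  have hA1 : A.eval 1 ≠ 0 := by
    intro h0
    have hz := key_zero ℓ m hm2 A hAdeg hAcong h0
    rw [hz] at hAtop
    simp at hAtop
  set lam : ℂ := f.eval 1 / A.eval 1 with hlam
  have hp1 : (f - Polynomial.C lam * A).eval 1 = 0 := by
    rw [Polynomial.eval_sub, Polynomial.eval_mul, Polynomial.eval_C, hlam,
      div_mul_cancel₀ _ hA1, sub_self]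
  have hpdeg : (f - Polynomial.C lam * A).natDegree ≤ ℓ := by
    refine le_trans (Polynomial.natDegree_sub_le _ _) ?_
    rw [hdeg]
    exact max_le le_rfl (le_trans (Polynomial.natDegree_C_mul_le _ _) hAdeg)
  have hpdvd : (1 - Polynomial.X)^(ℓ+1) ∣ (f - Polynomial.C lam * A).comp (Polynomial.X^m)
      - (Polynomial.C ((m : ℂ))⁻¹ * ∑ i ∈ Finset.range m, Polynomial.X ^ i) ^ (ℓ + 1)
        * (f - Polynomial.C lam * A) := by
    have hexpr : (f - Polynomial.C lam * A).comp (Polynomial.X^m)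
        - (Polynomial.C ((m : ℂ))⁻¹ * ∑ i ∈ Finset.range m, Polynomial.X ^ i) ^ (ℓ + 1)
          * (f - Polynomial.C lam * A)
        = (f.comp (Polynomial.X^m)
            - (Polynomial.C ((m : ℂ))⁻¹ * ∑ i ∈ Finset.range m, Polynomial.X ^ i) ^ (ℓ + 1) * f)
          - Polynomial.C lam * (A.comp (Polynomial.X^m)
            - (Polynomial.C ((m : ℂ))⁻¹ * ∑ i ∈ Finset.range m, Polynomial.X ^ i) ^ (ℓ + 1) * A) := by
      rw [Polynomial.sub_comp, Polynomial.mul_comp, Polynomial.C_comp]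
      ring
    rw [hexpr]
    exact dvd_sub hdvd_f (Dvd.dvd.mul_left hAcong _)
  have hp0 := key_zero ℓ m hm2 _ hpdeg hpdvd hp1
  have hfA : f = Polynomial.C lam * A := sub_eq_zero.mp hp0
  have hcoefff : f.coeff ℓ = 1 := by
    have hh := hmonic.coeff_natDegree
    rwa [hdeg] at hh
  have hlam1 : lam = 1 := by
    have hc := congrArg (fun q => Polynomial.coeff q ℓ) hfA
    simp only [Polynomial.coeff_C_mul] at hc
    rw [hcoefff, hAtop, mul_one] at hc
    exact hc.symm
  rw [hfA, hlam1, Polynomial.C_1, one_mul]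
end

section
/- Let f(x) ∈ ℂ[x] be monic of degree ℓ > 0. Then f = A_ℓ if and only if f(x²) ≡ ((1+x)/2)^{ℓ+1} f(x) mod (1-x)^{ℓ+1}. -/
open PowerSeries Polynomial

namespace EulerAux
open Finset

lemma natDegree_X_add_one : ((Polynomial.X : Polynomial ℂ) + 1).natDegree = 1 := by
  simpa using Polynomial.natDegree_X_add_C (1:ℂ)

lemma leadingCoeff_comp_X_add_one (p : Polynomial ℂ) :
    (p.comp (Polynomial.X + 1)).leadingCoeff = p.leadingCoeff := by
  rw [leadingCoeff_comp (by rw [natDegree_X_add_one]; norm_num)]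
  have h : ((Polynomial.X : Polynomial ℂ) + 1).leadingCoeff = 1 := by
    have := Polynomial.monic_X_add_C (1:ℂ)
    simpa using this.leadingCoeff
  rw [h, one_pow, mul_one]

lemma natDegree_comp_X_add_one (p : Polynomial ℂ) :
    (p.comp (Polynomial.X + 1)).natDegree = p.natDegree := by
  rw [natDegree_comp, natDegree_X_add_one, mul_one]

lemma sub_comp_X_add_one_natDegree_lt (p : Polynomial ℂ) (hpne : p ≠ 0) :
    (p.comp (Polynomial.X + 1) - p).natDegree < p.natDegree ∨ p.comp (Polynomial.X + 1) - p = 0 := by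
  rcases eq_or_ne (p.comp (Polynomial.X+1) - p) 0 with h | h
  · exact Or.inr h
  · left
    have h1 : (p.comp (Polynomial.X + 1)).natDegree = p.natDegree := natDegree_comp_X_add_one p
    have hcne : p.comp (Polynomial.X+1) ≠ 0 := fun hh => by
      have := leadingCoeff_comp_X_add_one p
      rw [hh, leadingCoeff_zero] at this
      exact hpne (leadingCoeff_eq_zero.mp this.symm)
    have h3 : (p.comp (Polynomial.X+1) - p).degree < p.degree := by
      have h4 := Polynomial.degree_sub_lt
        (p := p.comp (Polynomial.X+1)) (q := p)
        (by rw [degree_eq_natDegree hcne, degree_eq_natDegree hpne, h1])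
        hcne (leadingCoeff_comp_X_add_one p)
      rwa [degree_eq_natDegree hcne, h1, ← degree_eq_natDegree hpne] at h4
    exact natDegree_lt_natDegree h h3

lemma alt_step (m : ℕ) (v : ℕ → ℂ) :
    ∑ j ∈ range (m+2), (-1:ℂ)^j * ((m+1).choose j) * v j
    = ∑ j ∈ range (m+1), (-1:ℂ)^j * (m.choose j) * (v j - v (j+1)) := by
  have h1 := Finset.sum_range_succ' (fun j => (-1:ℂ)^j * (((m+1).choose j):ℂ) * v j) (m+1)
  have h2 := Finset.sum_range_succ' (fun j => (-1:ℂ)^j * ((m.choose j):ℂ) * v j) (m+1)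
  have h3 := Finset.sum_range_succ (fun j => (-1:ℂ)^j * ((m.choose j):ℂ) * v j) (m+1)
  simp only [Nat.choose_succ_self, Nat.cast_zero, pow_zero, Nat.choose_zero_right,
    Nat.cast_one, one_mul, mul_zero, zero_mul, add_zero] at h1 h2 h3
  rw [show (m+2) = (m+1)+1 from rfl, h1]
  have key : ∑ j ∈ range (m+1), (-1:ℂ)^(j+1) * ((m.choose (j+1)):ℂ) * v (j+1) + v 0
      = ∑ j ∈ range (m+1), (-1:ℂ)^j * ((m.choose j):ℂ) * v j := by
    rw [← h2, h3]
  have expand : ∀ j ∈ range (m+1),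
      (-1:ℂ)^(j+1) * (((m+1).choose (j+1)):ℂ) * v (j+1)
      = (-1:ℂ)^(j+1) * ((m.choose (j+1)):ℂ) * v (j+1)
        - (-1:ℂ)^j * ((m.choose j):ℂ) * v (j+1) := by
    intro j _
    rw [Nat.choose_succ_succ, Nat.cast_add, pow_succ]
    ring
  rw [Finset.sum_congr rfl expand, Finset.sum_sub_distrib]
  have expand2 : ∀ j ∈ range (m+1),
      (-1:ℂ)^j * ((m.choose j):ℂ) * (v j - v (j+1))
      = (-1:ℂ)^j * ((m.choose j):ℂ) * v j - (-1:ℂ)^j * ((m.choose j):ℂ) * v (j+1) := by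
    intro j _; ring
  rw [Finset.sum_congr rfl expand2, Finset.sum_sub_distrib, ← key]
  ring

lemma alt_sum_eval : ∀ (m : ℕ) (p : Polynomial ℂ), p.natDegree < m →
    ∑ j ∈ Finset.range (m+1), (-1:ℂ)^j * (m.choose j) * p.eval (j:ℂ) = 0 := by
  intro m
  induction m with
  | zero => intro p hp; omega
  | succ m ih =>
    intro p hp
    rw [show m + 1 + 1 = m + 2 from rfl, alt_step m (fun j => p.eval (j:ℂ))]
    by_cases hp0 : p.natDegree = 0
    · obtain ⟨c, rfl⟩ := Polynomial.natDegree_eq_zero.mp hp0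
      simp
    · set q : Polynomial ℂ := p.comp (Polynomial.X + 1) - p with hqdef
      have hpne : p ≠ 0 := fun h => hp0 (by simp [h])
      have hdegq : q.natDegree < m := by
        rcases sub_comp_X_add_one_natDegree_lt p hpne with h | h
        · rw [← hqdef] at h; omega
        · rw [hqdef, h, natDegree_zero]; omega
      have hqev : ∀ j : ℕ, p.eval (j:ℂ) - p.eval ((j+1:ℕ):ℂ) = -(q.eval (j:ℂ)) := by
        intro j
        rw [hqdef]
        push_cast
        simp [eval_comp]
      calc ∑ j ∈ range (m+1), (-1:ℂ)^j * (m.choose j) * (p.eval (j:ℂ) - p.eval ((j+1:ℕ):ℂ))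
          = ∑ j ∈ range (m+1), -((-1:ℂ)^j * (m.choose j) * q.eval (j:ℂ)) := by
            refine Finset.sum_congr rfl fun j _ => ?_
            rw [hqev j]; ring
        _ = -∑ j ∈ range (m+1), (-1:ℂ)^j * (m.choose j) * q.eval (j:ℂ) := by
            rw [Finset.sum_neg_distrib]
        _ = 0 := by rw [ih q hdegq, neg_zero]

noncomputable def Epo (f : PowerSeries ℂ) : PowerSeries ℂ :=
  PowerSeries.mk fun n => if Even n then PowerSeries.coeff (n/2) f else 0

lemma coeff_Epo (f : PowerSeries ℂ) (n : ℕ) :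
    PowerSeries.coeff n (Epo f) = if Even n then PowerSeries.coeff (n/2) f else 0 :=
  PowerSeries.coeff_mk _ _

lemma Epo_mul (f g : PowerSeries ℂ) : Epo (f * g) = Epo f * Epo g := by
  ext n
  rw [coeff_Epo, PowerSeries.coeff_mul (φ := Epo f), PowerSeries.coeff_mul]
  by_cases hn : Even n
  · obtain ⟨m, rfl⟩ := hn
    rw [if_pos ⟨m, rfl⟩]
    have hdiv : (m + m) / 2 = m := by omega
    rw [hdiv]
    set emb : ℕ × ℕ ↪ ℕ × ℕ :=
      ⟨fun q => (2 * q.1, 2 * q.2), show Function.Injective (fun q : ℕ × ℕ => (2 * q.1, 2 * q.2)) from (by intro a b h; simp only [Prod.mk.injEq] at h; exact Prod.ext (by omega) (by omega))⟩ with hemb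
    have hsub : (Finset.HasAntidiagonal.antidiagonal m).map emb ⊆ Finset.HasAntidiagonal.antidiagonal (m + m) := by
      intro p hp
      simp only [Finset.mem_map, Finset.HasAntidiagonal.mem_antidiagonal, hemb,
        Function.Embedding.coeFn_mk] at hp ⊢
      obtain ⟨q, hq, rfl⟩ := hp
      omega
    rw [← Finset.sum_subset hsub]
    · rw [Finset.sum_map]
      refine Finset.sum_congr rfl fun q _ => ?_
      simp only [hemb, Function.Embedding.coeFn_mk, coeff_Epo]
      rw [if_pos ⟨q.1, by ring⟩, if_pos ⟨q.2, by ring⟩]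
      have e1 : 2 * q.1 / 2 = q.1 := by omega
      have e2 : 2 * q.2 / 2 = q.2 := by omega
      rw [e1, e2]
    · intro p hp hps
      simp only [Finset.HasAntidiagonal.mem_antidiagonal] at hp
      by_cases h1 : Even p.1
      · exfalso
        apply hps
        obtain ⟨a, ha⟩ := h1
        have h2 : Even p.2 := ⟨m - a, by omega⟩
        obtain ⟨b, hb⟩ := h2
        simp only [Finset.mem_map, Finset.HasAntidiagonal.mem_antidiagonal, hemb,
          Function.Embedding.coeFn_mk]
        refine ⟨(a, b), by omega, ?_⟩
        refine Prod.ext ?_ ?_ <;> simp <;> omega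
      · rw [coeff_Epo, if_neg h1, zero_mul]
  · rw [if_neg hn]
    symm
    apply Finset.sum_eq_zero
    intro p hp
    simp only [Finset.HasAntidiagonal.mem_antidiagonal] at hp
    by_cases h1 : Even p.1
    · have h2 : ¬ Even p.2 := by
        intro h2; exact hn (by rw [← hp]; exact h1.add h2)
      rw [coeff_Epo g p.2, if_neg h2, mul_zero]
    · rw [coeff_Epo, if_neg h1, zero_mul]

lemma Epo_sub (f g : PowerSeries ℂ) : Epo (f - g) = Epo f - Epo g := by
  ext n; simp only [coeff_Epo, map_sub]
  split <;> simp

lemma Epo_one : Epo 1 = 1 := by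
  ext n
  rw [coeff_Epo]
  rcases eq_or_ne n 0 with rfl | hn
  · simp
  · rw [show ((PowerSeries.coeff n) (1 : PowerSeries ℂ)) = 0 from by
      rw [PowerSeries.coeff_one, if_neg hn]]
    split
    · rename_i he
      obtain ⟨m, rfl⟩ := he
      rw [PowerSeries.coeff_one, if_neg (by omega)]
    · rfl

lemma Epo_pow (f : PowerSeries ℂ) (k : ℕ) : Epo (f ^ k) = (Epo f) ^ k := by
  induction k with
  | zero => simpa using Epo_one
  | succ k ih => rw [pow_succ, pow_succ, Epo_mul, ih]

lemma Epo_X : Epo (PowerSeries.X : PowerSeries ℂ) = PowerSeries.X ^ 2 := by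
  ext n
  rw [coeff_Epo, PowerSeries.coeff_X_pow]
  by_cases h : Even n
  · obtain ⟨m, rfl⟩ := h
    have hdiv : (m + m) / 2 = m := by omega
    rw [if_pos ⟨m, rfl⟩, hdiv, PowerSeries.coeff_X]
    by_cases hm : m = 1
    · subst hm; norm_num
    · rw [if_neg hm, if_neg (by omega)]
  · rw [if_neg h, if_neg (by rintro rfl; exact h even_two)]

lemma Epo_one_sub_X : Epo (1 - PowerSeries.X : PowerSeries ℂ) = 1 - PowerSeries.X ^ 2 := by
  rw [Epo_sub, Epo_one, Epo_X]

lemma Epo_coe (p : Polynomial ℂ) :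
    Epo (p : PowerSeries ℂ) = ((Polynomial.expand ℂ 2 p : Polynomial ℂ) : PowerSeries ℂ) := by
  ext n
  rw [coeff_Epo, Polynomial.coeff_coe, Polynomial.coeff_coe, Polynomial.coeff_expand (by norm_num)]
  by_cases h : Even n
  · rw [if_pos h, if_pos h.two_dvd]
  · rw [if_neg h, if_neg (fun hd => h (Nat.even_iff.mpr (by omega)))]

lemma coeff_comp_neg_X (p : Polynomial ℂ) (n : ℕ) :
    (p.comp (-Polynomial.X)).coeff n = (-1)^n * p.coeff n := by
  induction p using Polynomial.induction_on' with
  | add p q hp hq => simp [add_comp, hp, hq, mul_add]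
  | monomial i a =>
    rw [Polynomial.monomial_comp]
    rw [show (-Polynomial.X : Polynomial ℂ)^i = Polynomial.C ((-1)^i) * Polynomial.X^i by
      rw [neg_pow]; simp [map_pow]]
    rw [← mul_assoc, ← map_mul, Polynomial.coeff_C_mul, Polynomial.coeff_X_pow,
      Polynomial.coeff_monomial]
    by_cases h : i = n
    · subst h; simp [mul_comm]
    · simp [h, Ne.symm h]

lemma rescale_coe (p : Polynomial ℂ) :
    PowerSeries.rescale (-1 : ℂ) (p : PowerSeries ℂ) = ((p.comp (-Polynomial.X) : Polynomial ℂ) : PowerSeries ℂ) := by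
  ext n
  rw [PowerSeries.coeff_rescale, Polynomial.coeff_coe, Polynomial.coeff_coe, coeff_comp_neg_X]

lemma rescale_one_sub_X :
    PowerSeries.rescale (-1 : ℂ) (1 - PowerSeries.X) = 1 + PowerSeries.X := by
  rw [map_sub, map_one, PowerSeries.rescale_neg_one_X, sub_neg_eq_add]


lemma Fsum (ℓ : ℕ) :
    PowerSeries.mk (fun n => (n:ℂ)^ℓ) + PowerSeries.rescale (-1:ℂ) (PowerSeries.mk fun n => (n:ℂ)^ℓ)
    = PowerSeries.C (2^(ℓ+1)) * Epo (PowerSeries.mk fun n => (n:ℂ)^ℓ) := by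
  ext n
  simp only [map_add, PowerSeries.coeff_rescale, PowerSeries.coeff_mk,
    PowerSeries.coeff_C_mul, Epo]
  by_cases h : Even n
  · obtain ⟨m, rfl⟩ := h
    rw [if_pos ⟨m, rfl⟩]
    have hdiv : (m + m) / 2 = m := by omega
    rw [hdiv, Even.neg_one_pow ⟨m, rfl⟩, one_mul]
    have : ((m + m : ℕ) : ℂ) = 2 * m := by push_cast; ring
    rw [this]
    ring
  · rw [if_neg h, Odd.neg_one_pow (Nat.odd_iff.mpr (by
      rcases Nat.even_or_odd n with he | ho
      · exact absurd he h
      · exact Nat.odd_iff.mp ho))]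
    ring

lemma coeff_one_sub_X_pow (m i : ℕ) :
    ((1 - Polynomial.X : Polynomial ℂ)^m).coeff i = (-1:ℂ)^i * (m.choose i) := by
  have h : (1 - Polynomial.X : Polynomial ℂ) = (-Polynomial.X) + 1 := by ring
  rw [h, add_pow, Polynomial.finset_sum_coeff]
  have hterm : ∀ k, ((-Polynomial.X : Polynomial ℂ)^k * 1^(m-k) * ((m.choose k : ℕ) : Polynomial ℂ))
      = Polynomial.C ((-1:ℂ)^k * (m.choose k : ℂ)) * Polynomial.X^k := by
    intro k
    rw [one_pow, neg_pow, mul_one]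
    rw [← Polynomial.C_eq_natCast, map_mul, map_pow, map_neg, map_one]
    ring
  calc ∑ k ∈ range (m+1), ((-Polynomial.X : Polynomial ℂ)^k * 1^(m-k) * ((m.choose k : ℕ) : Polynomial ℂ)).coeff i
      = ∑ k ∈ range (m+1), if i = k then (-1:ℂ)^k * (m.choose k : ℂ) else 0 := by
        refine Finset.sum_congr rfl fun k _ => ?_
        rw [hterm k, Polynomial.coeff_C_mul, Polynomial.coeff_X_pow]
        split <;> simp
    _ = (-1:ℂ)^i * (m.choose i) := by
        by_cases hi : i ∈ range (m+1)
        · rw [Finset.sum_ite_eq (range (m+1)) i (fun k => (-1:ℂ)^k * (m.choose k : ℂ)), if_pos hi]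
        · rw [Finset.sum_eq_zero (fun k hk => by
            rw [if_neg]; intro h; subst h; exact hi hk)]
          rw [Nat.choose_eq_zero_of_lt (by simpa using hi)]
          simp

lemma A_coeff (ℓ : ℕ) (A : Polynomial ℂ)
    (hA : (A : PowerSeries ℂ) =
      (1 - PowerSeries.X) ^ (ℓ + 1) * PowerSeries.mk (fun n => (n : ℂ) ^ ℓ)) (k : ℕ) :
    A.coeff k = ∑ j ∈ range (k+1), (-1:ℂ)^j * ((ℓ+1).choose j) * ((k - j : ℕ) : ℂ)^ℓ := by
  have hcoe : ((1 - PowerSeries.X : PowerSeries ℂ))^(ℓ+1)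
      = (((1 - Polynomial.X : Polynomial ℂ)^(ℓ+1) : Polynomial ℂ) : PowerSeries ℂ) := by
    rw [Polynomial.coe_pow, Polynomial.coe_sub, Polynomial.coe_one, Polynomial.coe_X]
  rw [← Polynomial.coeff_coe, hA, hcoe, PowerSeries.coeff_mul,
    Finset.Nat.sum_antidiagonal_eq_sum_range_succ_mk]
  refine Finset.sum_congr rfl fun j _ => ?_
  rw [Polynomial.coeff_coe, coeff_one_sub_X_pow, PowerSeries.coeff_mk]

lemma vanish (ℓ : ℕ) (e : Polynomial ℂ)
    (hdvd : (Polynomial.X : Polynomial ℂ)^(ℓ+1) ∣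
      e.comp (Polynomial.X^2 + 2 * Polynomial.X)
        - (Polynomial.C (2:ℂ)⁻¹ * (Polynomial.X + 2))^(ℓ+1) * e)
    (h0 : e.coeff 0 = 0) : ∀ j, j ≤ ℓ → e.coeff j = 0 := by
  intro j
  induction j using Nat.strong_induction_on with
  | _ j ih =>
    intro hj
    rcases Nat.eq_zero_or_pos j with rfl | hjpos
    · exact h0
    · have hxj : (Polynomial.X : Polynomial ℂ)^j ∣ e :=
        Polynomial.X_pow_dvd_iff.mpr (fun i hi => ih i hi (by omega))
      obtain ⟨g, hg⟩ := hxj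
      have hc := Polynomial.X_pow_dvd_iff.mp hdvd j (by omega)
      rw [Polynomial.coeff_sub] at hc
      have hcomp : e.comp (Polynomial.X^2 + 2 * Polynomial.X)
          = Polynomial.X^j * ((Polynomial.X + 2)^j * g.comp (Polynomial.X^2 + 2 * Polynomial.X)) := by
        rw [hg, Polynomial.mul_comp, Polynomial.pow_comp, Polynomial.X_comp,
          show ((Polynomial.X:Polynomial ℂ)^2 + 2*Polynomial.X) = Polynomial.X*(Polynomial.X+2) from by ring,
          mul_pow]
        ring
      have hprod : (Polynomial.C (2:ℂ)⁻¹ * (Polynomial.X + 2))^(ℓ+1) * e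
          = Polynomial.X^j * ((Polynomial.C (2:ℂ)⁻¹ * (Polynomial.X + 2))^(ℓ+1) * g) := by
        rw [hg]; ring
      have hcoeff1 : (e.comp (Polynomial.X^2 + 2 * Polynomial.X)).coeff j
          = (2:ℂ)^j * g.coeff 0 := by
        rw [hcomp]
        have h1 := Polynomial.coeff_X_pow_mul
          ((Polynomial.X + 2)^j * g.comp (Polynomial.X^2 + 2 * Polynomial.X)) j 0
        rw [zero_add] at h1
        rw [h1]
        simp [Polynomial.mul_coeff_zero, Polynomial.coeff_zero_eq_eval_zero, Polynomial.eval_comp]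
      have hcoeff2 : ((Polynomial.C (2:ℂ)⁻¹ * (Polynomial.X + 2))^(ℓ+1) * e).coeff j
          = g.coeff 0 := by
        rw [hprod]
        have h1 := Polynomial.coeff_X_pow_mul
          ((Polynomial.C (2:ℂ)⁻¹ * (Polynomial.X + 2))^(ℓ+1) * g) j 0
        rw [zero_add] at h1
        rw [h1]
        simp [Polynomial.mul_coeff_zero, Polynomial.coeff_zero_eq_eval_zero]
      rw [hcoeff1, hcoeff2] at hc
      have hg0 : g.coeff 0 = 0 := by
        have h2 : ((2:ℂ)^j - 1) * g.coeff 0 = 0 := by linear_combination hc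
        rcases mul_eq_zero.mp h2 with h3 | h3
        · exfalso
          have h4 : ((2^j : ℕ) : ℂ) = ((1:ℕ) : ℂ) := by
            push_cast
            linear_combination h3
          have h5 := Nat.cast_injective h4
          have := Nat.one_lt_two_pow_iff.mpr (by omega : j ≠ 0)
          omega
        · exact h3
      have h6 := Polynomial.coeff_X_pow_mul g j 0
      rw [zero_add] at h6
      rw [hg, h6, hg0]

lemma natDegree_C_sub_X_pow (c : ℂ) (ℓ : ℕ) :
    ((Polynomial.C c - Polynomial.X)^ℓ).natDegree = ℓ := by
  rw [Polynomial.natDegree_pow,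
    show (Polynomial.C c - Polynomial.X) = -(Polynomial.X - Polynomial.C c) from by ring,
    Polynomial.natDegree_neg, Polynomial.natDegree_X_sub_C, mul_one]

lemma A_coeff_zero (ℓ : ℕ) (A : Polynomial ℂ)
    (hA : (A : PowerSeries ℂ) =
      (1 - PowerSeries.X) ^ (ℓ + 1) * PowerSeries.mk (fun n => (n : ℂ) ^ ℓ))
    (k : ℕ) (hk : ℓ < k) : A.coeff k = 0 := by
  rw [A_coeff ℓ A hA k]
  have hsub : range (ℓ+2) ⊆ range (k+1) := by
    intro x hx; simp only [Finset.mem_range] at hx ⊢; omega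
  rw [← Finset.sum_subset hsub (fun j hj hj2 => by
    rw [Nat.choose_eq_zero_of_lt (by simp only [Finset.mem_range] at hj2 ⊢; omega)]
    simp)]
  have h0 := alt_sum_eval (ℓ+1) ((Polynomial.C (k:ℂ) - Polynomial.X)^ℓ)
    (by rw [natDegree_C_sub_X_pow]; omega)
  rw [← h0]
  refine Finset.sum_congr rfl fun j hj => ?_
  simp only [Finset.mem_range] at hj
  rw [Polynomial.eval_pow, Polynomial.eval_sub, Polynomial.eval_C, Polynomial.eval_X,
    Nat.cast_sub (by omega : j ≤ k)]

lemma A_coeff_top (ℓ : ℕ) (A : Polynomial ℂ)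
    (hA : (A : PowerSeries ℂ) =
      (1 - PowerSeries.X) ^ (ℓ + 1) * PowerSeries.mk (fun n => (n : ℂ) ^ ℓ)) :
    A.coeff ℓ = 1 := by
  rw [A_coeff ℓ A hA ℓ]
  have h0 := alt_sum_eval (ℓ+1) ((Polynomial.C (ℓ:ℂ) - Polynomial.X)^ℓ)
    (by rw [natDegree_C_sub_X_pow]; omega)
  rw [Finset.sum_range_succ] at h0
  have hlast : (-1:ℂ)^(ℓ+1) * (((ℓ+1).choose (ℓ+1) : ℕ):ℂ) *
      ((Polynomial.C (ℓ:ℂ) - Polynomial.X)^ℓ).eval ((ℓ+1 : ℕ):ℂ) = -1 := by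
    rw [Nat.choose_self]
    rw [Polynomial.eval_pow, Polynomial.eval_sub, Polynomial.eval_C, Polynomial.eval_X]
    push_cast
    rw [show ((ℓ:ℂ) - ((ℓ:ℂ)+1)) = -1 from by ring]
    rw [mul_one, ← pow_add, show ℓ+1+ℓ = 2*ℓ+1 from by omega,
      pow_succ, pow_mul]
    norm_num
  rw [hlast] at h0
  have h1 : ∑ j ∈ range (ℓ+1), (-1:ℂ)^j * (((ℓ+1).choose j : ℕ):ℂ) *
      ((Polynomial.C (ℓ:ℂ) - Polynomial.X)^ℓ).eval (j:ℂ) = 1 := by linear_combination h0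
  have hconv : ∑ j ∈ range (ℓ+1), (-1:ℂ)^j * (((ℓ+1).choose j : ℕ):ℂ) * ((ℓ - j : ℕ) : ℂ)^ℓ
      = ∑ j ∈ range (ℓ+1), (-1:ℂ)^j * (((ℓ+1).choose j : ℕ):ℂ) *
          ((Polynomial.C (ℓ:ℂ) - Polynomial.X)^ℓ).eval (j:ℂ) := by
    refine Finset.sum_congr rfl fun j hj => ?_
    simp only [Finset.mem_range] at hj
    rw [Polynomial.eval_pow, Polynomial.eval_sub, Polynomial.eval_C, Polynomial.eval_X,
      Nat.cast_sub (by omega : j ≤ ℓ)]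
  rw [hconv]
  exact h1

lemma keyid (ℓ : ℕ) (A : Polynomial ℂ)
    (hA : (A : PowerSeries ℂ) =
      (1 - PowerSeries.X) ^ (ℓ + 1) * PowerSeries.mk (fun n => (n : ℂ) ^ ℓ)) :
    Polynomial.C ((2:ℂ)^(ℓ+1)) * Polynomial.expand ℂ 2 A
      = (1 + Polynomial.X)^(ℓ+1) * A
        + (1 - Polynomial.X)^(ℓ+1) * (A.comp (-Polynomial.X)) := by
  rw [← Polynomial.coe_inj]
  rw [Polynomial.coe_mul, Polynomial.coe_add, Polynomial.coe_mul, Polynomial.coe_mul,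
    Polynomial.coe_pow, Polynomial.coe_pow, Polynomial.coe_add, Polynomial.coe_sub,
    Polynomial.coe_one, Polynomial.coe_X, Polynomial.coe_C]
  rw [← Epo_coe, ← rescale_coe, hA]
  rw [Epo_mul, Epo_pow, Epo_one_sub_X, map_mul,
    map_pow (PowerSeries.rescale (-1:ℂ)) (1 - PowerSeries.X) (ℓ+1), rescale_one_sub_X]
  rw [show (1 - PowerSeries.X^2 : PowerSeries ℂ)
      = (1 - PowerSeries.X) * (1 + PowerSeries.X) from by ring, mul_pow]
  linear_combination (-((1-PowerSeries.X)^(ℓ+1) * (1+PowerSeries.X)^(ℓ+1))) * Fsum ℓ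

lemma satA (ℓ : ℕ) (A : Polynomial ℂ)
    (hA : (A : PowerSeries ℂ) =
      (1 - PowerSeries.X) ^ (ℓ + 1) * PowerSeries.mk (fun n => (n : ℂ) ^ ℓ)) :
    (1 - Polynomial.X) ^ (ℓ + 1) ∣
      A.comp (Polynomial.X ^ 2) -
        (Polynomial.C ((2 : ℂ))⁻¹ * (1 + Polynomial.X)) ^ (ℓ + 1) * A := by
  refine ⟨Polynomial.C ((2:ℂ)⁻¹^(ℓ+1)) * A.comp (-Polynomial.X), ?_⟩
  have h2 : Polynomial.C ((2:ℂ)⁻¹^(ℓ+1)) * Polynomial.C ((2:ℂ)^(ℓ+1)) = 1 := by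
    rw [← map_mul, ← mul_pow]
    norm_num
  have key2 := keyid ℓ A hA
  have hexp : A.comp (Polynomial.X ^ 2) = Polynomial.expand ℂ 2 A :=
    (Polynomial.expand_eq_comp_X_pow (f := A) 2).symm
  rw [hexp, show ((Polynomial.C ((2:ℂ))⁻¹ * (1 + Polynomial.X)) ^ (ℓ + 1))
      = Polynomial.C ((2:ℂ)⁻¹^(ℓ+1)) * (1 + Polynomial.X)^(ℓ+1) from by
    rw [mul_pow, map_pow]]
  calc Polynomial.expand ℂ 2 A - Polynomial.C ((2:ℂ)⁻¹^(ℓ+1)) * (1 + Polynomial.X)^(ℓ+1) * A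
      = Polynomial.C ((2:ℂ)⁻¹^(ℓ+1)) *
          (Polynomial.C ((2:ℂ)^(ℓ+1)) * Polynomial.expand ℂ 2 A)
        - Polynomial.C ((2:ℂ)⁻¹^(ℓ+1)) * (1 + Polynomial.X)^(ℓ+1) * A := by
        rw [← mul_assoc, h2, one_mul]
    _ = (1 - Polynomial.X) ^ (ℓ + 1) *
          (Polynomial.C ((2:ℂ)⁻¹^(ℓ+1)) * A.comp (-Polynomial.X)) := by
        rw [key2]; ring

lemma comp_X_add_one_coeff_top (p : Polynomial ℂ) (n : ℕ) (hp : p.natDegree ≤ n) :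
    (p.comp (Polynomial.X + 1)).coeff n = p.coeff n := by
  rcases lt_or_eq_of_le hp with hlt | heq
  · rw [Polynomial.coeff_eq_zero_of_natDegree_lt hlt,
      Polynomial.coeff_eq_zero_of_natDegree_lt (by rwa [natDegree_comp_X_add_one])]
  · have h1 : (p.comp (Polynomial.X + 1)).natDegree = n := by
      rw [natDegree_comp_X_add_one, heq]
    rw [← h1, Polynomial.coeff_natDegree, leadingCoeff_comp_X_add_one, h1, ← heq,
      Polynomial.coeff_natDegree]

lemma transfer (ℓ : ℕ) (p : Polynomial ℂ)
    (hp : (1 - Polynomial.X) ^ (ℓ + 1) ∣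
      p.comp (Polynomial.X ^ 2) -
        (Polynomial.C ((2 : ℂ))⁻¹ * (1 + Polynomial.X)) ^ (ℓ + 1) * p) :
    (Polynomial.X : Polynomial ℂ)^(ℓ+1) ∣
      (p.comp (Polynomial.X + 1)).comp (Polynomial.X^2 + 2 * Polynomial.X)
        - (Polynomial.C (2:ℂ)⁻¹ * (Polynomial.X + 2))^(ℓ+1) * (p.comp (Polynomial.X + 1)) := by
  obtain ⟨w, hw⟩ := hp
  have hw1 := congrArg (fun q => q.comp (Polynomial.X + 1)) hw
  simp only [Polynomial.sub_comp, Polynomial.mul_comp, Polynomial.pow_comp,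
    Polynomial.add_comp, Polynomial.sub_comp, Polynomial.one_comp, Polynomial.X_comp,
    Polynomial.C_comp] at hw1
  -- hw1 : (p.comp (Polynomial.X^2)).comp (Polynomial.X+1) - (C 2⁻¹ * (1 + (Polynomial.X+1)))^(ℓ+1) * p.comp (Polynomial.X+1)
  --        = (1 - (Polynomial.X+1))^(ℓ+1) * w.comp (Polynomial.X+1)
  have hc1 : (p.comp (Polynomial.X ^ 2)).comp (Polynomial.X + 1)
      = (p.comp (Polynomial.X + 1)).comp (Polynomial.X^2 + 2 * Polynomial.X) := by
    rw [Polynomial.comp_assoc, Polynomial.comp_assoc]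
    congr 1
    simp only [Polynomial.pow_comp, Polynomial.X_comp, Polynomial.add_comp,
      Polynomial.mul_comp, Polynomial.one_comp, Polynomial.ofNat_comp]
    ring
  rw [hc1] at hw1
  have hc2 : (Polynomial.C (2:ℂ)⁻¹ * (1 + (Polynomial.X + 1)))^(ℓ+1)
      = (Polynomial.C (2:ℂ)⁻¹ * (Polynomial.X + 2))^(ℓ+1) := by ring_nf
  have hc3 : (1 - (Polynomial.X + 1) : Polynomial ℂ)^(ℓ+1)
      = (-1:Polynomial ℂ)^(ℓ+1) * Polynomial.X^(ℓ+1) := by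
    rw [← mul_pow]
    ring_nf
  rw [hc2, hc3] at hw1
  exact ⟨(-1:Polynomial ℂ)^(ℓ+1) * w.comp (Polynomial.X + 1), by rw [hw1]; ring⟩

end EulerAux

/-- A monic `f ∈ ℂ[x]` of degree `ℓ > 0` equals the Eulerian polynomial `A_ℓ`
if and only if `f(x²) ≡ ((1+x)/2)^{ℓ+1}·f(x) mod (1-x)^{ℓ+1}`. -/
theorem eulerian_characterization_m2 (ℓ : ℕ) (hℓ : 0 < ℓ) (f : Polynomial ℂ)
    (hmonic : f.Monic) (hdeg : f.natDegree = ℓ)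
    (A : Polynomial ℂ)
    (hA : (A : PowerSeries ℂ) =
      (1 - PowerSeries.X) ^ (ℓ + 1) * PowerSeries.mk (fun n => (n : ℂ) ^ ℓ)) :
    f = A ↔
      (1 - Polynomial.X) ^ (ℓ + 1) ∣
        f.comp (Polynomial.X ^ 2) -
          (Polynomial.C ((2 : ℂ))⁻¹ * (1 + Polynomial.X)) ^ (ℓ + 1) * f := by
  have hAdeg : A.natDegree ≤ ℓ :=
    Polynomial.natDegree_le_iff_coeff_eq_zero.mpr (fun N hN => EulerAux.A_coeff_zero ℓ A hA N hN)
  have hAtop := EulerAux.A_coeff_top ℓ A hA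
  have hsatA := EulerAux.satA ℓ A hA
  constructor
  · rintro rfl; exact hsatA
  · intro hf
    have hdd : (1 - Polynomial.X) ^ (ℓ + 1) ∣
        (f - A).comp (Polynomial.X ^ 2) -
          (Polynomial.C ((2:ℂ))⁻¹ * (1 + Polynomial.X)) ^ (ℓ + 1) * (f - A) := by
      have heq : (f - A).comp (Polynomial.X ^ 2) -
          (Polynomial.C ((2:ℂ))⁻¹ * (1 + Polynomial.X)) ^ (ℓ + 1) * (f - A)
          = (f.comp (Polynomial.X ^ 2) -
              (Polynomial.C ((2:ℂ))⁻¹ * (1 + Polynomial.X)) ^ (ℓ + 1) * f)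
            - (A.comp (Polynomial.X ^ 2) -
              (Polynomial.C ((2:ℂ))⁻¹ * (1 + Polynomial.X)) ^ (ℓ + 1) * A) := by
        rw [Polynomial.sub_comp]; ring
      rw [heq]
      exact dvd_sub hf hsatA
    have he := EulerAux.transfer ℓ (f - A) hdd
    have hA' := EulerAux.transfer ℓ A hsatA
    have hddeg : (f - A).natDegree ≤ ℓ :=
      le_trans (Polynomial.natDegree_sub_le f A) (max_le (le_of_eq hdeg) hAdeg)
    have hftop : f.coeff ℓ = 1 := by
      have := hmonic.coeff_natDegree
      rwa [hdeg] at this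
    have hdtopc : (f - A).coeff ℓ = 0 := by
      rw [Polynomial.coeff_sub, hftop, hAtop, sub_self]
    have hetop : ((f - A).comp (Polynomial.X + 1)).coeff ℓ = 0 := by
      rw [EulerAux.comp_X_add_one_coeff_top (f - A) ℓ hddeg, hdtopc]
    have hAcomptop : (A.comp (Polynomial.X + 1)).coeff ℓ = 1 := by
      rw [EulerAux.comp_X_add_one_coeff_top A ℓ hAdeg, hAtop]
    set α := ((f - A).comp (Polynomial.X + 1)).coeff 0 with hα
    set β := (A.comp (Polynomial.X + 1)).coeff 0 with hβ
    have hh : (Polynomial.X : Polynomial ℂ)^(ℓ+1) ∣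
        (Polynomial.C β * ((f - A).comp (Polynomial.X + 1))
          - Polynomial.C α * (A.comp (Polynomial.X + 1))).comp
            (Polynomial.X^2 + 2 * Polynomial.X)
        - (Polynomial.C (2:ℂ)⁻¹ * (Polynomial.X + 2))^(ℓ+1) *
          (Polynomial.C β * ((f - A).comp (Polynomial.X + 1))
            - Polynomial.C α * (A.comp (Polynomial.X + 1))) := by
      have heq : (Polynomial.C β * ((f - A).comp (Polynomial.X + 1))
          - Polynomial.C α * (A.comp (Polynomial.X + 1))).comp
            (Polynomial.X^2 + 2 * Polynomial.X)
          - (Polynomial.C (2:ℂ)⁻¹ * (Polynomial.X + 2))^(ℓ+1) *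
            (Polynomial.C β * ((f - A).comp (Polynomial.X + 1))
              - Polynomial.C α * (A.comp (Polynomial.X + 1)))
          = Polynomial.C β *
              (((f - A).comp (Polynomial.X + 1)).comp (Polynomial.X^2 + 2 * Polynomial.X)
                - (Polynomial.C (2:ℂ)⁻¹ * (Polynomial.X + 2))^(ℓ+1) *
                  ((f - A).comp (Polynomial.X + 1)))
            - Polynomial.C α *
              ((A.comp (Polynomial.X + 1)).comp (Polynomial.X^2 + 2 * Polynomial.X)
                - (Polynomial.C (2:ℂ)⁻¹ * (Polynomial.X + 2))^(ℓ+1) *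
                  (A.comp (Polynomial.X + 1))) := by
        simp only [Polynomial.sub_comp, Polynomial.mul_comp, Polynomial.C_comp]
        ring
      rw [heq]
      exact dvd_sub (he.mul_left _) (hA'.mul_left _)
    have hh0 : (Polynomial.C β * ((f - A).comp (Polynomial.X + 1))
        - Polynomial.C α * (A.comp (Polynomial.X + 1))).coeff 0 = 0 := by
      rw [Polynomial.coeff_sub, Polynomial.coeff_C_mul, Polynomial.coeff_C_mul]
      ring
    have hhl := EulerAux.vanish ℓ _ hh hh0 ℓ le_rfl
    rw [Polynomial.coeff_sub, Polynomial.coeff_C_mul, Polynomial.coeff_C_mul,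
      hetop, hAcomptop] at hhl
    have hα0 : α = 0 := by
      have h2 : β * 0 - α * 1 = 0 := hhl
      linear_combination -h2
    have hes := EulerAux.vanish ℓ ((f - A).comp (Polynomial.X + 1)) he (by rw [← hα]; exact hα0)
    have hedeg : ((f - A).comp (Polynomial.X + 1)).natDegree ≤ ℓ := by
      rw [EulerAux.natDegree_comp_X_add_one]; exact hddeg
    have hezero : (f - A).comp (Polynomial.X + 1) = 0 := by
      apply Polynomial.ext; intro n
      rw [Polynomial.coeff_zero]
      rcases le_or_gt n ℓ with h | h
      · exact hes n h
      · exact Polynomial.coeff_eq_zero_of_natDegree_lt (lt_of_le_of_lt hedeg h)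
    have hdzero : f - A = 0 := by
      have h1 : f - A = ((f - A).comp (Polynomial.X + 1)).comp (Polynomial.X - 1) := by
        rw [Polynomial.comp_assoc]
        rw [show (Polynomial.X + 1 : Polynomial ℂ).comp (Polynomial.X - 1) = Polynomial.X from by
          simp [Polynomial.add_comp]]
        rw [Polynomial.comp_X]
      rw [h1, hezero, Polynomial.zero_comp]
    exact sub_eq_zero.mp hdzero
end
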